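/- arXiv:1903.03881 — 11 statements merged into one kernel-verified Lean document; each statement's English description precedes it below -/
import Mathlib

section
/- Let p be a prime and U ⊆ F_p^2 with #U ≤ p. If U is not contained in a line of F_p^2, then U determines at least ⌈(#U + 3)/2⌉ directions. -/
open Finset Polynomial

attribute [local instance] Classical.propDecidable

/-- The line in `(ZMod p)²` with slope `m` (where `none` denotes the vertical
slope `∞`) and "intercept" `c`. -/
noncomputable def lineWithSlope (p : ℕ) [NeZero p] (m : Option (ZMod p)) (c : ZMod p) :
    Finset (ZMod p × ZMod p) :=
  match m with
  | some m => Finset.univ.filter fun q => q.2 = m * q.1 + c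
  | none => Finset.univ.filter fun q => q.1 = c

/-- `ℓ` is `U`-rich: it meets `U` in at least `#U/p + 1` points. -/
def IsRich (p : ℕ) (U ℓ : Finset (ZMod p × ZMod p)) : Prop :=
  (U.card : ℚ) / p + 1 ≤ ((ℓ ∩ U).card : ℚ)

/-- `ℓ` is `U`-poor: it meets `U` in at most `#U/p - 1` points. -/
def IsPoor (p : ℕ) (U ℓ : Finset (ZMod p × ZMod p)) : Prop :=
  ((ℓ ∩ U).card : ℚ) ≤ (U.card : ℚ) / p - 1

/-- `m` is a `U`-rich direction: some line with slope `m` is `U`-rich. -/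
def IsRichDir (p : ℕ) [NeZero p] (U : Finset (ZMod p × ZMod p))
    (m : Option (ZMod p)) : Prop :=
  ∃ c : ZMod p, IsRich p U (lineWithSlope p m c)

/-- `m` is a `U`-special direction: some line with slope `m` is `U`-rich or `U`-poor. -/
def IsSpecialDir (p : ℕ) [NeZero p] (U : Finset (ZMod p × ZMod p))
    (m : Option (ZMod p)) : Prop :=
  ∃ c : ZMod p, IsRich p U (lineWithSlope p m c) ∨ IsPoor p U (lineWithSlope p m c)

/-- `U` determines the direction `m`: some line with slope `m` contains two
distinct points of `U`. -/
def Determines (p : ℕ) [NeZero p] (U : Finset (ZMod p × ZMod p))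
    (m : Option (ZMod p)) : Prop :=
  ∃ c : ZMod p, ∃ u ∈ U, ∃ v ∈ U,
    u ≠ v ∧ u ∈ lineWithSlope p m c ∧ v ∈ lineWithSlope p m c

namespace RedeiAux

variable {p : ℕ} [Fact p.Prime]

variable {p : ℕ} [Fact p.Prime]

/-- value of a point in direction `m` -/
def pval (m : ZMod p) (q : ZMod p × ZMod p) : ZMod p := q.2 - q.1 * m

lemma mem_line_some {m c : ZMod p} {q : ZMod p × ZMod p} :
    q ∈ lineWithSlope p (some m) c ↔ pval m q = c := by
  show q ∈ Finset.univ.filter _ ↔ _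
  simp only [Finset.mem_filter, Finset.mem_univ, true_and, pval, sub_eq_iff_eq_add]
  constructor <;> (intro h; rw [h]; ring)

lemma mem_line_none {c : ZMod p} {q : ZMod p × ZMod p} :
    q ∈ lineWithSlope p none c ↔ q.1 = c := by
  show q ∈ Finset.univ.filter _ ↔ _
  simp

lemma determines_some_iff {U : Finset (ZMod p × ZMod p)} {m : ZMod p} :
    Determines p U (some m) ↔ ∃ u ∈ U, ∃ w ∈ U, u ≠ w ∧ pval m u = pval m w := by
  constructor
  · rintro ⟨c, u, hu, w, hw, hne, h1, h2⟩
    exact ⟨u, hu, w, hw, hne, by rw [mem_line_some.mp h1, mem_line_some.mp h2]⟩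
  · rintro ⟨u, hu, w, hw, hne, h⟩
    exact ⟨pval m u, u, hu, w, hw, hne, mem_line_some.mpr rfl, mem_line_some.mpr h.symm⟩

lemma determines_none_iff {U : Finset (ZMod p × ZMod p)} :
    Determines p U none ↔ ∃ u ∈ U, ∃ w ∈ U, u ≠ w ∧ u.1 = w.1 := by
  constructor
  · rintro ⟨c, u, hu, w, hw, hne, h1, h2⟩
    exact ⟨u, hu, w, hw, hne, by rw [mem_line_none.mp h1, mem_line_none.mp h2]⟩
  · rintro ⟨u, hu, w, hw, hne, h⟩
    exact ⟨u.1, u, hu, w, hw, hne, mem_line_none.mpr rfl, mem_line_none.mpr h.symm⟩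

/-- Total degree bound for bivariate polynomials (polynomials over a polynomial ring). -/
def TB (f : Polynomial (Polynomial (ZMod p))) (k : ℕ) : Prop :=
  ∀ i, f.coeff i ≠ 0 → (f.coeff i).natDegree + i ≤ k

lemma TB_one : TB (1 : Polynomial (Polynomial (ZMod p))) 0 := by
  intro i hi
  rcases eq_or_ne i 0 with rfl | h
  · simp
  · simp [coeff_one, h] at hi

lemma TB_sub {f g : Polynomial (Polynomial (ZMod p))} {k : ℕ} (hf : TB f k) (hg : TB g k) :
    TB (f - g) k := by
  intro i hi
  have h := natDegree_sub_le (f.coeff i) (g.coeff i)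
  rw [coeff_sub] at hi ⊢
  rcases eq_or_ne (f.coeff i) 0 with h1 | h1 <;> rcases eq_or_ne (g.coeff i) 0 with h2 | h2
  · simp [h1, h2] at hi
  · have hb := hg i h2; simp only [h1, zero_sub, natDegree_neg]; omega
  · have hb := hf i h1; simp only [h2, sub_zero]; omega
  · have hb1 := hf i h1; have hb2 := hg i h2
    rcases Nat.le_total (f.coeff i).natDegree (g.coeff i).natDegree with hle | hle
    · rw [max_eq_right hle] at h; omega
    · rw [max_eq_left hle] at h; omega

lemma TB_mul {f g : Polynomial (Polynomial (ZMod p))} {a b : ℕ} (hf : TB f a) (hg : TB g b) :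
    TB (f * g) (a + b) := by
  intro t ht
  rw [coeff_mul] at ht ⊢
  obtain ⟨x, hx, hxne⟩ : ∃ x ∈ Finset.HasAntidiagonal.antidiagonal t, f.coeff x.1 * g.coeff x.2 ≠ 0 := by
    by_contra hc; push_neg at hc; exact ht (Finset.sum_eq_zero hc)
  have hx1 : f.coeff x.1 ≠ 0 := left_ne_zero_of_mul hxne
  have hx2 : g.coeff x.2 ≠ 0 := right_ne_zero_of_mul hxne
  have hxs := Finset.HasAntidiagonal.mem_antidiagonal.mp hx
  have h1 := hf _ hx1; have h2 := hg _ hx2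
  have hdeg : (∑ y ∈ Finset.HasAntidiagonal.antidiagonal t, f.coeff y.1 * g.coeff y.2).natDegree ≤ a + b - t := by
    apply natDegree_sum_le_of_forall_le
    intro y hy
    rcases eq_or_ne (f.coeff y.1 * g.coeff y.2) 0 with h0 | h0
    · simp [h0]
    · have hy1 : f.coeff y.1 ≠ 0 := left_ne_zero_of_mul h0
      have hy2 : g.coeff y.2 ≠ 0 := right_ne_zero_of_mul h0
      have hb1 := hf _ hy1; have hb2 := hg _ hy2
      have hm := natDegree_mul_le (p := f.coeff y.1) (q := g.coeff y.2)
      have hys := Finset.HasAntidiagonal.mem_antidiagonal.mp hy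
      omega
  omega

lemma TB_prod {ι : Type*} (s : Finset ι) (f : ι → Polynomial (Polynomial (ZMod p))) (b : ι → ℕ)
    (h : ∀ i ∈ s, TB (f i) (b i)) : TB (∏ i ∈ s, f i) (∑ i ∈ s, b i) := by
  induction s using Finset.cons_induction with
  | empty => simpa using TB_one
  | cons a s ha ih =>
    rw [Finset.prod_cons, Finset.sum_cons]
    exact TB_mul (h a (Finset.mem_cons_self a s)) (ih fun i hi => h i (Finset.mem_cons_of_mem hi))

lemma nd_add_bound {a b : Polynomial (ZMod p)} {s : ℕ}
    (ha : a ≠ 0 → a.natDegree ≤ s) (hb : b ≠ 0 → b.natDegree ≤ s) :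
    (a + b).natDegree ≤ s := by
  rcases eq_or_ne a 0 with rfl | h1
  · rcases eq_or_ne b 0 with rfl | h2
    · simp
    · simpa using hb h2
  · rcases eq_or_ne b 0 with rfl | h2
    · simpa using ha h1
    · have h := natDegree_add_le a b
      have := ha h1; have := hb h2
      rcases Nat.le_total a.natDegree b.natDegree with hle | hle
      · rw [max_eq_right hle] at h; omega
      · rw [max_eq_left hle] at h; omega

lemma div_bound (h : Polynomial (Polynomial (ZMod p))) (n k : ℕ) (hmon : h.Monic)
    (hdeg : h.natDegree = n) (hn : 1 ≤ n) (hTB : TB h n) :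
    ∀ D (f : Polynomial (Polynomial (ZMod p))), f.natDegree ≤ D → TB f k →
      ∃ q r, f = h * q + r ∧ r.natDegree < n ∧ TB r k ∧
        ∀ i, q.coeff i ≠ 0 → (q.coeff i).natDegree + i + n ≤ k := by
  intro D
  induction D using Nat.strong_induction_on with
  | _ D IH =>
    intro f hfD hfTB
    by_cases hlt : f.natDegree < n
    · exact ⟨0, f, by ring, hlt, hfTB, by simp⟩
    push_neg at hlt
    have hf0 : f ≠ 0 := by
      intro h0; rw [h0, natDegree_zero] at hlt; omega
    set Df := f.natDegree with hDf
    have hc0 : f.coeff Df ≠ 0 := by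
      rw [hDf]; exact leadingCoeff_ne_zero.mpr hf0
    set c := f.coeff Df with hc
    have hck : c.natDegree + Df ≤ k := hfTB Df hc0
    have hnk : n ≤ k := le_trans (le_trans hlt (Nat.le_add_left _ _)) hck
    set t := Df - n with ht
    set g : Polynomial (Polynomial (ZMod p)) := h * (C c * X ^ t) with hg
    have hgrep : g = (h * C c) * X ^ t := by rw [hg]; ring
    have hgcoeff : ∀ j, g.coeff j = if t ≤ j then h.coeff (j - t) * c else 0 := by
      intro j
      rw [hgrep, coeff_mul_X_pow']
      by_cases hj : t ≤ j <;> simp [hj, coeff_mul_C]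
    have hgDf : g.coeff Df = c := by
      rw [hgcoeff, if_pos (Nat.sub_le _ _)]
      have : Df - t = n := by omega
      rw [this]
      have : h.coeff n = 1 := by rw [← hdeg]; exact hmon.coeff_natDegree
      rw [this, one_mul]
    have hghigh : ∀ N, Df < N → g.coeff N = 0 := by
      intro N hN
      rw [hgcoeff]
      rcases le_or_gt t N with hle | hlt'
      · rw [if_pos hle]
        have : h.natDegree < N - t := by omega
        rw [coeff_eq_zero_of_natDegree_lt this, zero_mul]
      · rw [if_neg (by omega)]
    set f₁ := f - g with hf₁
    have hf₁deg : f₁.natDegree ≤ Df - 1 := by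
      rw [natDegree_le_iff_coeff_eq_zero]
      intro N hN
      rcases eq_or_lt_of_le (show Df ≤ N by omega) with rfl | hNgt
      · rw [hf₁, coeff_sub, hgDf, ← hc, sub_self]
      · rw [hf₁, coeff_sub, hghigh N hNgt, coeff_eq_zero_of_natDegree_lt hNgt, sub_self]
    have hTBCcX : TB (C c * X ^ t) (k - n) := by
      intro i hi
      rw [coeff_C_mul, coeff_X_pow] at hi
      rcases eq_or_ne i t with rfl | hne
      · simp only [if_pos rfl, mul_one] at hi ⊢
        rw [coeff_C_mul, coeff_X_pow, if_pos rfl, mul_one]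
        omega
      · simp [hne] at hi
    have hTBg : TB g k := by
      have := TB_mul hTB hTBCcX
      have heq : n + (k - n) = k := by omega
      rwa [heq] at this
    have hTBf₁ : TB f₁ k := TB_sub hfTB hTBg
    obtain ⟨q₁, r, hid1, hr, hrTB, hq1⟩ := IH (Df - 1) (by omega) f₁ hf₁deg hTBf₁
    refine ⟨q₁ + C c * X ^ t, r, ?_, hr, hrTB, ?_⟩
    · have : f = f₁ + g := by rw [hf₁]; ring
      rw [this, hid1, hg]; ring
    · intro i hi
      rw [coeff_add] at hi ⊢
      have hb2 : (C c * X ^ t).coeff i ≠ 0 → ((C c * X ^ t).coeff i).natDegree + i + n ≤ k := by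
        intro h2
        rw [coeff_C_mul, coeff_X_pow] at h2 ⊢
        rcases eq_or_ne i t with rfl | hne
        · rw [if_pos rfl, mul_one]; omega
        · simp [hne] at h2
      have hb1 : q₁.coeff i ≠ 0 → (q₁.coeff i).natDegree + i + n ≤ k := hq1 i
      -- combine
      have hik : i + n ≤ k := by
        rcases eq_or_ne (q₁.coeff i) 0 with h1 | h1
        · rcases eq_or_ne ((C c * X ^ t).coeff i) 0 with h2 | h2
          · rw [h1, h2, add_zero] at hi; exact absurd rfl hi
          · have := hb2 h2; omega
        · have := hb1 h1; omega
      have := nd_add_bound (s := k - (i + n)) (fun h1 => by have := hb1 h1; omega)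
        (fun h2 => by have := hb2 h2; omega)
      omega

lemma deriv_dvd {a : ZMod p} {e : ℕ} {f : Polynomial (ZMod p)} (h : (X - C a) ^ e ∣ f) :
    (X - C a) ^ (e - 1) ∣ derivative f := by
  rcases e with _ | e
  · simpa using one_dvd _
  obtain ⟨g, rfl⟩ := h
  rw [derivative_mul, derivative_pow, derivative_sub, derivative_X, derivative_C, sub_zero,
    mul_one, Nat.add_sub_cancel]
  exact ⟨C ((e + 1 : ℕ) : ZMod p) * g + (X - C a) * derivative g, by rw [pow_succ]; ring⟩

lemma core (U : Finset (ZMod p × ZMod p)) (hcard : U.card ≤ p)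
    (hline : ¬ ∃ (m : Option (ZMod p)) (c : ZMod p), U ⊆ lineWithSlope p m c)
    (hinf : Determines p U none) :
    U.card + 3 ≤ 2 * (Finset.univ.filter fun m => Determines p U m).card := by
  classical
  have hp : p.Prime := Fact.out
  have hp2 : 2 ≤ p := hp.two_le
  set n := U.card with hn
  set D := Finset.univ.filter fun m => Determines p U m with hD
  set d := D.card with hd
  -- trivial case
  by_cases hbig : p + 3 ≤ 2 * d
  · omega
  push_neg at hbig
  have hdp : d ≤ p := by omega
  -- U is nonempty
  have hU0 : U.Nonempty := by
    by_contra hemp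
    rw [Finset.not_nonempty_iff_eq_empty] at hemp
    exact hline ⟨none, 0, by simp [hemp]⟩
  have hn1 : 1 ≤ n := Finset.card_pos.mpr hU0
  -- an affine determined direction
  obtain ⟨u₀, hu₀⟩ := hU0
  obtain ⟨w, hwU, hwx⟩ : ∃ w ∈ U, w.1 ≠ u₀.1 := by
    by_contra hc
    push_neg at hc
    exact hline ⟨none, u₀.1, fun q hq => mem_line_none.mpr (hc q hq)⟩
  set μ : ZMod p := (w.2 - u₀.2) / (w.1 - u₀.1) with hμ
  have hwu : w ≠ u₀ := fun h => hwx (by rw [h])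
  have ha : pval μ u₀ = pval μ w := by
    unfold pval
    rw [hμ]
    have hne : w.1 - u₀.1 ≠ 0 := sub_ne_zero.mpr hwx
    field_simp
    ring
  have hdetμ : Determines p U (some μ) := determines_some_iff.mpr ⟨u₀, hu₀, w, hwU, hwu.symm, ha⟩
  -- direction counts
  set DA := Finset.univ.filter fun m : ZMod p => Determines p U (some m) with hDA
  set ND := Finset.univ.filter fun m : ZMod p => ¬ Determines p U (some m) with hND
  have hcount : DA.card + ND.card = p := by
    rw [hDA, hND]
    rw [Finset.card_filter_add_card_filter_not]
    simp [ZMod.card]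
  have hDAd : DA.card + 1 ≤ d := by
    have hsub : insert none (DA.image some) ⊆ D := by
      intro x hx
      rcases Finset.mem_insert.mp hx with rfl | hx
      · simp only [hD, Finset.mem_filter, Finset.mem_univ, true_and]; exact hinf
      · obtain ⟨m, hm, rfl⟩ := Finset.mem_image.mp hx
        simp only [hDA, Finset.mem_filter, Finset.mem_univ, true_and] at hm
        simp only [hD, Finset.mem_filter, Finset.mem_univ, true_and]; exact hm
    have := Finset.card_le_card hsub
    rwa [Finset.card_insert_of_notMem (by simp),
      Finset.card_image_of_injective _ (Option.some_injective _)] at this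
  have hd1 : 1 ≤ d := by omega
  -- the Rédei polynomial
  set Hbig : Polynomial (Polynomial (ZMod p)) :=
    ∏ u ∈ U, (X - C (Polynomial.C u.2 - Polynomial.C u.1 * Polynomial.X)) with hHbig
  have hHmon : Hbig.Monic := monic_prod_of_monic _ _ fun u _ => monic_X_sub_C _
  have hHdeg : Hbig.natDegree = n := by
    rw [hHbig, natDegree_prod_of_monic _ _ fun u _ => monic_X_sub_C _]
    simp only [natDegree_X_sub_C, Finset.sum_const, smul_eq_mul, mul_one]
    exact hn.symm
  have hHTB : TB Hbig n := by
    have hfac : ∀ u ∈ U, TB (X - C (Polynomial.C u.2 - Polynomial.C u.1 * Polynomial.X)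
        : Polynomial (Polynomial (ZMod p))) 1 := by
      intro u _ i hi
      have hs : (Polynomial.C u.2 - Polynomial.C u.1 * Polynomial.X : Polynomial (ZMod p)).natDegree ≤ 1 := by
        refine le_trans (natDegree_sub_le _ _) (max_le (by simp) ?_)
        exact le_trans (natDegree_mul_le) (by simp)
      rcases i with _ | _ | i
      · rw [coeff_sub, coeff_X_zero, coeff_C_zero, zero_sub, natDegree_neg]
        omega
      · rw [coeff_sub, coeff_X_one, coeff_C, if_neg (by omega), sub_zero]
        simp
      · rw [coeff_sub, coeff_X, if_neg (by omega), coeff_C, if_neg (by omega), sub_self] at hi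
        exact absurd rfl hi
    have := TB_prod U _ (fun _ => 1) hfac
    rwa [Finset.sum_const, smul_eq_mul, mul_one, ← hn] at this
  -- divide X^p - X by it
  have hf₀TB : TB ((X : Polynomial (Polynomial (ZMod p))) ^ p - X) p := by
    intro i hi
    rw [coeff_sub, coeff_X_pow, coeff_X] at hi ⊢
    by_cases h1 : i = p
    · subst h1
      rw [if_pos rfl, if_neg (by omega), sub_zero]
      simp
    · by_cases h2 : i = 1
      · subst h2
        rw [if_neg (by omega), if_pos rfl, zero_sub, natDegree_neg]
        simp
        omega
      · rw [if_neg h1, if_neg (fun h => h2 h.symm), sub_self] at hi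
        exact absurd rfl hi
  have hf₀deg : ((X : Polynomial (Polynomial (ZMod p))) ^ p - X).natDegree ≤ p := by
    refine le_trans (natDegree_sub_le _ _) (max_le (by simp) (by simp; omega))
  obtain ⟨Q, R, hid, hRdeg, hRTB, hQb⟩ :=
    div_bound Hbig n p hHmon hHdeg hn1 hHTB p _ hf₀deg hf₀TB
  -- evaluation facts
  have hmapH : ∀ m : ZMod p, Hbig.map (evalRingHom m) = ∏ u ∈ U, (X - C (pval m u)) := by
    intro m
    rw [hHbig, Polynomial.map_prod]
    refine Finset.prod_congr rfl fun u _ => ?_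
    rw [Polynomial.map_sub, map_X, map_C]
    simp [pval]
  have hmapid : ∀ m : ZMod p,
      (X : Polynomial (ZMod p)) ^ p - X =
        Hbig.map (evalRingHom m) * Q.map (evalRingHom m) + R.map (evalRingHom m) := by
    intro m
    have := congrArg (Polynomial.map (evalRingHom m)) hid
    simpa only [Polynomial.map_add, Polynomial.map_mul, Polynomial.map_sub, Polynomial.map_pow,
      map_X] using this
  -- vanishing of high coefficients of R
  have hvanish : ∀ i, d ≤ i → R.coeff i = 0 := by
    intro i hdi
    rcases eq_or_ne (R.coeff i) 0 with h0 | h0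
    · exact h0
    have hdegi : (R.coeff i).natDegree + i ≤ p := hRTB i h0
    apply eq_zero_of_natDegree_lt_card_of_eval_eq_zero' (R.coeff i) ND
    · intro m hm
      simp only [hND, Finset.mem_filter, Finset.mem_univ, true_and] at hm
      -- R.map (evalRingHom m) = 0
      have hinj : ∀ u ∈ U, ∀ w ∈ U, pval m u = pval m w → u = w := by
        intro u hu w hw he
        by_contra hne
        exact hm (determines_some_iff.mpr ⟨u, hu, w, hw, hne, he⟩)
      have hdvd : Hbig.map (evalRingHom m) ∣ (X : Polynomial (ZMod p)) ^ p - X := by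
        have him : (∏ c ∈ U.image (pval m), ((X : Polynomial (ZMod p)) - C c))
            = ∏ u ∈ U, (X - C (pval m u)) := Finset.prod_image hinj
        rw [hmapH m, ← him]
        refine Finset.prod_dvd_of_coprime ?_ ?_
        · exact ((pairwise_coprime_X_sub_C Function.injective_id).set_pairwise _)
        · intro c _
          refine dvd_iff_isRoot.mpr ?_
          simp [IsRoot, ZMod.pow_card]
      obtain ⟨W, hW⟩ := hdvd
      have hRm : R.map (evalRingHom m) = Hbig.map (evalRingHom m) * (W - Q.map (evalRingHom m)) := by
        have h1 := hmapid m
        linear_combination hW - h1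
      have hRm0 : R.map (evalRingHom m) = 0 := by
        rcases eq_or_ne (W - Q.map (evalRingHom m)) 0 with hz | hz
        · rw [hRm, hz, mul_zero]
        exfalso
        have hmm : (Hbig.map (evalRingHom m)).Monic := hHmon.map _
        have hne : R.map (evalRingHom m) ≠ 0 := by
          rw [hRm]; exact mul_ne_zero hmm.ne_zero hz
        have hge : n ≤ (R.map (evalRingHom m)).natDegree := by
          have := natDegree_le_of_dvd (Dvd.intro _ hRm.symm) hne
          rwa [hHmon.natDegree_map, hHdeg] at this
        have hle : (R.map (evalRingHom m)).natDegree ≤ R.natDegree := natDegree_map_le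
        omega
      have := congrArg (fun g => Polynomial.coeff g i) hRm0
      simpa [coeff_map] using this
    · -- degree < card ND
      have : i ≤ p := by omega
      omega
  -- degree bound on specializations of R
  have hRd : ∀ m : ZMod p, (R.map (evalRingHom m)).natDegree ≤ d - 1 := by
    intro m
    rw [natDegree_le_iff_coeff_eq_zero]
    intro N hN
    rw [coeff_map, hvanish N (by omega), map_zero]
  -- now work at the determined direction μ
  set Rm := R.map (evalRingHom μ) with hRm
  set Qm := Q.map (evalRingHom μ) with hQm
  set Hm := Hbig.map (evalRingHom μ) with hHm
  have hidμ : (X : Polynomial (ZMod p)) ^ p - X = Hm * Qm + Rm := hmapid μ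
  set a : ZMod p := pval μ u₀ with haa
  have hder : derivative ((X : Polynomial (ZMod p)) ^ p - X) = -1 := by
    rw [derivative_sub, derivative_X_pow, derivative_X]
    simp [ZMod.natCast_self]
  -- Rm ≠ 0
  have hRm0 : Rm ≠ 0 := by
    intro h0
    have hfact : ((X : Polynomial (ZMod p)) - C a) ^ 2 ∣ Hm := by
      have hpair : ((X : Polynomial (ZMod p)) - C a) ^ 2
          = ∏ u ∈ ({u₀, w} : Finset (ZMod p × ZMod p)), (X - C (pval μ u)) := by
        rw [Finset.prod_pair (fun h => hwu h.symm), ← haa, ← ha, sq]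
      rw [hHm, hmapH μ, hpair]
      exact Finset.prod_dvd_prod_of_subset _ _ _ (by
        intro x hx
        rcases Finset.mem_insert.mp hx with rfl | hx
        · exact hu₀
        · rw [Finset.mem_singleton.mp hx]; exact hwU)
    have h2 : ((X : Polynomial (ZMod p)) - C a) ∣ derivative ((X : Polynomial (ZMod p)) ^ p - X) := by
      have hdd : ((X : Polynomial (ZMod p)) - C a) ^ 2 ∣ (X : Polynomial (ZMod p)) ^ p - X := by
        have : (X : Polynomial (ZMod p)) ^ p - X = Hm * Qm := by rw [hidμ, h0, add_zero]
        rw [this]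
        exact hfact.trans (dvd_mul_right _ _)
      simpa using deriv_dvd hdd
    rw [hder] at h2
    have := dvd_iff_isRoot.mp h2
    simp [IsRoot] at this
  -- fibre sizes
  set ev : ZMod p → ℕ := fun c => (U.filter fun u => pval μ u = c).card with hev
  have hfib : ∏ c ∈ Finset.univ, ((X : Polynomial (ZMod p)) - C c) ^ ev c = Hm := by
    rw [hHm, hmapH μ,
      ← Finset.prod_fiberwise_of_maps_to (fun u _ => Finset.mem_univ (pval μ u))
        (fun u => (X : Polynomial (ZMod p)) - C (pval μ u))]
    refine Finset.prod_congr rfl fun c _ => ?_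
    rw [show ev c = (U.filter fun u => pval μ u = c).card from rfl, ← Finset.prod_const]
    refine Finset.prod_congr rfl fun u hu => ?_
    rw [(Finset.mem_filter.mp hu).2]
  set A := Finset.univ.filter fun c : ZMod p => ev c ≠ 0 with hA
  have hAprod : ∏ c ∈ A, ((X : Polynomial (ZMod p)) - C c) ^ ev c = Hm := by
    rw [← hfib, hA]
    exact Finset.prod_filter_of_ne (fun c _ hne h0 => hne (by rw [h0, pow_zero]))
  -- main divisibility
  have hdvd : Hm ∣ Rm * (1 + derivative Rm) := by
    rw [← hAprod]
    refine Finset.prod_dvd_of_coprime ?_ ?_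
    · intro x hx y hy hxy
      exact ((pairwise_coprime_X_sub_C Function.injective_id) hxy).pow
    · intro c hc
      have heA : 1 ≤ ev c := by
        have := (Finset.mem_filter.mp hc).2
        omega
      obtain ⟨u, huU, huc⟩ : ∃ u ∈ U, pval μ u = c := by
        have hne : (U.filter fun u => pval μ u = c).Nonempty :=
          Finset.card_pos.mp (show 0 < ev c by omega)
        obtain ⟨u, hu⟩ := hne
        exact ⟨u, (Finset.mem_filter.mp hu).1, (Finset.mem_filter.mp hu).2⟩
      have hHm0 : Hm.eval c = 0 := by
        rw [hHm, hmapH μ, eval_prod]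
        refine Finset.prod_eq_zero huU ?_
        simp [huc]
      have hroot : Rm.eval c = 0 := by
        have h1 := congrArg (Polynomial.eval c) hidμ
        simp only [eval_add, eval_mul, eval_sub, eval_pow, eval_X, hHm0, zero_mul, zero_add,
          ZMod.pow_card, sub_self] at h1
        exact h1.symm
      have hd1 : ((X : Polynomial (ZMod p)) - C c) ∣ Rm := dvd_iff_isRoot.mpr hroot
      have hpowH : ((X : Polynomial (ZMod p)) - C c) ^ ev c ∣ Hm := by
        rw [← hAprod]
        exact Finset.dvd_prod_of_mem _ hc
      have hHQ : Hm * Qm = (X : Polynomial (ZMod p)) ^ p - X - Rm := by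
        linear_combination -hidμ
      have hder2 : derivative (Hm * Qm) = -(1 + derivative Rm) := by
        rw [hHQ, derivative_sub, hder]
        ring
      have hd2 : ((X : Polynomial (ZMod p)) - C c) ^ (ev c - 1) ∣ 1 + derivative Rm := by
        have := deriv_dvd (hpowH.trans (dvd_mul_right Hm Qm))
        rw [hder2] at this
        exact (dvd_neg).mp this
      have hcomb := mul_dvd_mul hd2 hd1
      rw [← pow_succ, Nat.sub_add_cancel heA] at hcomb
      rwa [mul_comm (1 + derivative Rm)] at hcomb
  -- 1 + derivative Rm ≠ 0
  have h1R : 1 + derivative Rm ≠ 0 := by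
    intro h1
    have hRm' : derivative Rm = -1 := by linear_combination h1
    have hcoe : ∀ i, 2 ≤ i → Rm.coeff i = 0 := by
      intro i hi2
      rcases le_or_gt i (d - 1) with hle | hgt
      · have hco := congrArg (fun g => Polynomial.coeff g (i - 1)) hRm'
        simp only [coeff_derivative] at hco
        have hio : i - 1 + 1 = i := by omega
        rw [hio] at hco
        have hrhs : (-1 : Polynomial (ZMod p)).coeff (i - 1) = 0 := by
          rw [coeff_neg, coeff_one, if_neg (by omega), neg_zero]
        rw [hrhs] at hco
        rcases mul_eq_zero.mp hco with h | h
        · exact h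
        · exfalso
          have hcast : (((i - 1) + 1 : ℕ) : ZMod p) = 0 := by push_cast; push_cast at h; exact h
          rw [ZMod.natCast_eq_zero_iff] at hcast
          have := Nat.le_of_dvd (by omega) hcast
          omega
      · exact coeff_eq_zero_of_natDegree_lt (lt_of_le_of_lt (hRd μ) hgt)
    have hnd1 : Rm.natDegree ≤ 1 := natDegree_le_iff_coeff_eq_zero.mpr fun N hN => hcoe N (by omega)
    have hc1 : Rm.coeff 1 = -1 := by
      have hco := congrArg (fun g => Polynomial.coeff g 0) hRm'
      simp only [coeff_derivative] at hco
      simpa using hco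
    have hRmeq : Rm = C (Rm.coeff 1) * X + C (Rm.coeff 0) := eq_X_add_C_of_natDegree_le_one hnd1
    set c₀ := Rm.coeff 0 with hc₀
    have hCp : (C c₀ : Polynomial (ZMod p)) ^ p = C c₀ := by
      rw [← C_pow, ZMod.pow_card]
    have hHQ2 : Hm * Qm = ((X : Polynomial (ZMod p)) - C c₀) ^ p := by
      have hx : Hm * Qm = (X : Polynomial (ZMod p)) ^ p - X - Rm := by linear_combination -hidμ
      rw [hx, hRmeq, hc1, sub_pow_char, hCp, map_neg, C_1]
      ring
    have hall : ∀ u ∈ U, pval μ u = c₀ := by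
      intro u hu
      have h0 : (Hm * Qm).eval (pval μ u) = 0 := by
        rw [eval_mul]
        have hz : Hm.eval (pval μ u) = 0 := by
          rw [hHm, hmapH μ, eval_prod]
          exact Finset.prod_eq_zero hu (by simp)
        rw [hz, zero_mul]
      rw [hHQ2] at h0
      simp only [eval_pow, eval_sub, eval_X, eval_C] at h0
      have := pow_eq_zero_iff (n := p) (by omega) |>.mp h0
      exact sub_eq_zero.mp this
    exact hline ⟨some μ, c₀, fun u hu => mem_line_some.mpr (hall u hu)⟩
  -- final degree count
  have hne0 : Rm * (1 + derivative Rm) ≠ 0 := mul_ne_zero hRm0 h1R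
  have hfin1 : n ≤ Rm.natDegree + (1 + derivative Rm).natDegree := by
    have h1 := natDegree_le_of_dvd hdvd hne0
    have h2 := natDegree_mul_le (p := Rm) (q := 1 + derivative Rm)
    have h3 : Hm.natDegree = n := by rw [hHm, hHmon.natDegree_map, hHdeg]
    omega
  have hb1 : Rm.natDegree ≤ d - 1 := hRd μ
  have hb2 : (1 + derivative Rm).natDegree ≤ d - 1 - 1 := by
    rcases eq_or_ne Rm 0 with h | hne
    · exact absurd h hRm0
    refine nd_add_bound (fun _ => by simp) (fun _ => ?_)
    have := natDegree_derivative_le Rm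
    omega
  omega

/-- the affine change of coordinates sending direction `μ` to the vertical direction -/
def T (μ : ZMod p) (q : ZMod p × ZMod p) : ZMod p × ZMod p := (q.2 - μ * q.1, q.1)

lemma T_inj (μ : ZMod p) : Function.Injective (T (p := p) μ) := by
  intro a b h
  rw [T, T, Prod.ext_iff] at h
  obtain ⟨h1, h2⟩ := h
  exact Prod.ext h2 (by dsimp at h1; linear_combination h1 + μ * h2)

/-- induced action on directions -/
def ψ (μ : ZMod p) : Option (ZMod p) → Option (ZMod p)
  | none => some 0
  | some m => if m = μ then none else some (m - μ)⁻¹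

def ψinv (μ : ZMod p) : Option (ZMod p) → Option (ZMod p)
  | none => some μ
  | some t => if t = 0 then none else some (t⁻¹ + μ)

lemma ψ_left (μ : ZMod p) : Function.LeftInverse (ψinv μ) (ψ μ) := by
  intro m
  match m with
  | none => simp [ψ, ψinv]
  | some m =>
    by_cases hm : m = μ
    · simp [ψ, ψinv, hm]
    · have hne : m - μ ≠ 0 := sub_ne_zero.mpr hm
      simp [ψ, ψinv, hm, inv_eq_zero, hne, inv_inv, sub_add_cancel]

lemma ψ_right (μ : ZMod p) : Function.RightInverse (ψinv μ) (ψ μ) := by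
  intro m
  match m with
  | none => simp [ψ, ψinv]
  | some t =>
    by_cases ht : t = 0
    · simp [ψ, ψinv, ht]
    · have h1 : t⁻¹ ≠ 0 := inv_ne_zero ht
      simp [ψ, ψinv, ht, h1, add_sub_cancel_right, inv_inv]

lemma ψ_bij (μ : ZMod p) : Function.Bijective (ψ (p := p) μ) :=
  Function.bijective_iff_has_inverse.mpr ⟨ψinv μ, ψ_left μ, ψ_right μ⟩

/-- induced action on intercepts -/
def cmap (μ : ZMod p) (m : Option (ZMod p)) (c : ZMod p) : ZMod p :=
  match m with
  | none => c
  | some m => if m = μ then c else -(m - μ)⁻¹ * c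

lemma mem_line_T (μ : ZMod p) (m : Option (ZMod p)) (c : ZMod p) (q : ZMod p × ZMod p) :
    q ∈ lineWithSlope p m c ↔ T μ q ∈ lineWithSlope p (ψ μ m) (cmap μ m c) := by
  match m with
  | none =>
    rw [mem_line_none, show ψ μ none = some 0 from rfl, mem_line_some]
    show q.1 = c ↔ pval 0 (q.2 - μ * q.1, q.1) = c
    unfold pval
    simp
  | some m =>
    by_cases hm : m = μ
    · subst hm
      rw [mem_line_some, show ψ m (some m) = none from by simp [ψ], mem_line_none]
      show pval m q = c ↔ q.2 - m * q.1 = cmap m (some m) c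
      unfold pval
      rw [cmap, if_pos rfl]
      constructor <;> (intro h; linear_combination h)
    · have hne : m - μ ≠ 0 := sub_ne_zero.mpr hm
      have hs : (m - μ)⁻¹ * (m - μ) = 1 := inv_mul_cancel₀ hne
      rw [mem_line_some, show ψ μ (some m) = some (m - μ)⁻¹ from by simp [ψ, hm],
        mem_line_some]
      show pval m q = c ↔ pval (m - μ)⁻¹ (q.2 - μ * q.1, q.1) = cmap μ (some m) c
      unfold pval
      rw [cmap, if_neg hm]
      dsimp only
      constructor
      · intro h
        linear_combination (-(m - μ)⁻¹) * h - q.1 * hs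
      · intro h
        linear_combination (-(m - μ)) * h + (c - (q.2 - μ * q.1)) * hs

lemma cmap_surj (μ : ZMod p) (m : Option (ZMod p)) : Function.Surjective (cmap μ m) := by
  intro c'
  match m with
  | none => exact ⟨c', rfl⟩
  | some m =>
    by_cases hm : m = μ
    · exact ⟨c', by rw [cmap, if_pos hm]⟩
    · refine ⟨-(m - μ) * c', ?_⟩
      rw [cmap, if_neg hm]
      have hne : m - μ ≠ 0 := sub_ne_zero.mpr hm
      field_simp

lemma determines_T (μ : ZMod p) (U : Finset (ZMod p × ZMod p)) (m : Option (ZMod p)) :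
    Determines p (U.image (T μ)) (ψ μ m) ↔ Determines p U m := by
  constructor
  · rintro ⟨c', u', hu', w', hw', hne, h1, h2⟩
    obtain ⟨c, rfl⟩ := cmap_surj μ m c'
    obtain ⟨u, huU, rfl⟩ := Finset.mem_image.mp hu'
    obtain ⟨w, hwU, rfl⟩ := Finset.mem_image.mp hw'
    exact ⟨c, u, huU, w, hwU, fun h => hne (by rw [h]),
      (mem_line_T μ m c u).mpr h1, (mem_line_T μ m c w).mpr h2⟩
  · rintro ⟨c, u, hu, w, hw, hne, h1, h2⟩
    exact ⟨cmap μ m c, T μ u, Finset.mem_image_of_mem _ hu, T μ w,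
      Finset.mem_image_of_mem _ hw, fun h => hne (T_inj μ h),
      (mem_line_T μ m c u).mp h1, (mem_line_T μ m c w).mp h2⟩

lemma subline_T (μ : ZMod p) (U : Finset (ZMod p × ZMod p))
    (h : ∃ (m' : Option (ZMod p)) (c' : ZMod p), U.image (T μ) ⊆ lineWithSlope p m' c') :
    ∃ (m : Option (ZMod p)) (c : ZMod p), U ⊆ lineWithSlope p m c := by
  obtain ⟨m', c', hsub⟩ := h
  obtain ⟨m, rfl⟩ := (ψ_bij μ).2 m'
  obtain ⟨c, rfl⟩ := cmap_surj μ m c'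
  exact ⟨m, c, fun q hq => (mem_line_T μ m c q).mpr (hsub (Finset.mem_image_of_mem _ hq))⟩


end RedeiAux

open RedeiAux in
theorem redei_szonyi (p : ℕ) [Fact p.Prime] (U : Finset (ZMod p × ZMod p))
    (hcard : U.card ≤ p)
    (hline : ¬ ∃ (m : Option (ZMod p)) (c : ZMod p), U ⊆ lineWithSlope p m c) :
    ⌈((U.card : ℚ) + 3) / 2⌉
      ≤ ({m : Option (ZMod p) | Determines p U m}.ncard : ℤ) := by
  classical
  have hncard : ∀ (V : Finset (ZMod p × ZMod p)),
      {m : Option (ZMod p) | Determines p V m}.ncard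
        = (Finset.univ.filter fun m => Determines p V m).card := by
    intro V
    rw [show {m : Option (ZMod p) | Determines p V m}
        = ↑(Finset.univ.filter fun m => Determines p V m) from by ext; simp,
      Set.ncard_coe_finset]
  have key : U.card + 3 ≤ 2 * {m : Option (ZMod p) | Determines p U m}.ncard := by
    by_cases hinf : Determines p U none
    · rw [hncard U]
      exact core U hcard hline hinf
    · -- produce an affine determined direction
      have hU2 : ∃ u ∈ U, ∃ w ∈ U, u ≠ w := by
        by_contra hc
        push_neg at hc
        rcases Finset.eq_empty_or_nonempty U with rfl | ⟨u, hu⟩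
        · exact hline ⟨none, 0, by simp⟩
        · refine hline ⟨some 0, u.2, fun q hq => ?_⟩
          rw [hc q hq u hu]
          exact mem_line_some.mpr (by unfold pval; ring)
      obtain ⟨u, hu, w, hw, huw⟩ := hU2
      have hx : w.1 ≠ u.1 := by
        intro h
        exact hinf (determines_none_iff.mpr ⟨w, hw, u, hu, fun hh => huw hh.symm, h⟩)
      set μ : ZMod p := (w.2 - u.2) / (w.1 - u.1) with hμ
      have ha : pval μ u = pval μ w := by
        unfold pval
        rw [hμ]
        have hne : w.1 - u.1 ≠ 0 := sub_ne_zero.mpr hx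
        field_simp
        ring
      have hdetμ : Determines p U (some μ) := determines_some_iff.mpr ⟨u, hu, w, hw, huw, ha⟩
      set U' := U.image (T μ) with hU'
      have hcard' : U'.card = U.card := Finset.card_image_of_injective _ (T_inj μ)
      have hinf' : Determines p U' none := by
        have : ψ μ (some μ) = none := by simp [ψ]
        rw [← this]
        exact (determines_T μ U (some μ)).mpr hdetμ
      have hline' : ¬ ∃ (m' : Option (ZMod p)) (c' : ZMod p), U' ⊆ lineWithSlope p m' c' :=
        fun h => hline (subline_T μ U h)
      have hc := core U' (hcard' ▸ hcard) hline' hinf'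
      rw [hcard', ← hncard U'] at hc
      have hseteq : {m' : Option (ZMod p) | Determines p U' m'}
          = ψ μ '' {m : Option (ZMod p) | Determines p U m} := by
        ext m'
        simp only [Set.mem_image, Set.mem_setOf_eq]
        constructor
        · intro h
          obtain ⟨m, rfl⟩ := (ψ_bij μ).2 m'
          exact ⟨m, (determines_T μ U m).mp h, rfl⟩
        · rintro ⟨m, hm, rfl⟩
          exact (determines_T μ U m).mpr hm
      rwa [hseteq, Set.ncard_image_of_injective _ (ψ_bij μ).1] at hc
  -- ceiling arithmetic
  rw [Int.ceil_le]
  set N := {m : Option (ZMod p) | Determines p U m}.ncard with hN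
  push_cast
  rw [div_le_iff₀ (by norm_num : (0:ℚ) < 2)]
  have : (U.card : ℚ) + 3 ≤ 2 * N := by exact_mod_cast key
  linarith
end

section
/- Let p be a prime and U ⊆ F_p^2 with #U = n·p - r, where n and r are integers with n ≥ 1, 0 ≤ r < p, and p - r ≥ n + 1. Then every point of U lies on at least one U-rich line. -/
open Finset Polynomial

attribute [local instance] Classical.propDecidable

theorem every_point_on_rich_line (p n r : ℕ) [Fact p.Prime]
    (U : Finset (ZMod p × ZMod p))
    (hn : 1 ≤ n) (hr : r < p) (hpr : (n : ℤ) + 1 ≤ (p : ℤ) - r)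
    (hcard : (U.card : ℤ) = n * p - r) :
    ∀ u ∈ U, ∃ (m : Option (ZMod p)) (c : ZMod p),
      u ∈ lineWithSlope p m c ∧ IsRich p U (lineWithSlope p m c) := by
  intro u hu
  classical
  have hp : 0 < p := (Fact.out : p.Prime).pos
  set c : Option (ZMod p) → ZMod p := fun m => match m with
    | some m => u.2 - m * u.1
    | none => u.1 with hcdef
  set L : Option (ZMod p) → Finset (ZMod p × ZMod p) :=
    fun m => lineWithSlope p m (c m) with hLdef
  have huL : ∀ m, u ∈ L m := by
    intro m
    cases m with
    | none => simp [hLdef, hcdef, lineWithSlope]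
    | some m =>
      simp only [hLdef, hcdef, lineWithSlope, Finset.mem_filter, Finset.mem_univ, true_and]
      ring
  set dir : ZMod p × ZMod p → Option (ZMod p) := fun v =>
    if v.1 = u.1 then none else some ((v.2 - u.2) / (v.1 - u.1)) with hdir
  have hmem : ∀ v ∈ U.erase u, ∀ m, v ∈ L m ↔ dir v = m := by
    intro v hv m
    have hvu : v ≠ u := Finset.ne_of_mem_erase hv
    cases m with
    | none =>
      simp only [hLdef, hcdef, lineWithSlope, Finset.mem_filter, Finset.mem_univ, true_and,
        hdir]
      constructor
      · intro h; simp [h]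
      · intro h
        by_contra h1
        simp [h1] at h
    | some m =>
      simp only [hLdef, hcdef, lineWithSlope, Finset.mem_filter, Finset.mem_univ, true_and,
        hdir]
      constructor
      · intro h
        have h1 : v.1 ≠ u.1 := by
          intro he
          apply hvu
          have : v.2 = u.2 := by rw [h, he]; ring
          exact Prod.ext he this
        have hne : v.1 - u.1 ≠ 0 := sub_ne_zero.mpr h1
        simp only [h1, if_false, Option.some.injEq]
        field_simp
        linear_combination h
      · intro h
        by_cases h1 : v.1 = u.1
        · simp [h1] at h
        · simp only [h1, if_false, Option.some.injEq] at h
          have hne : v.1 - u.1 ≠ 0 := sub_ne_zero.mpr h1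
          have : m * (v.1 - u.1) = v.2 - u.2 := by
            rw [← h]; field_simp
          linear_combination -this
  have hLU : ∀ m, L m ∩ U = insert u ((U.erase u).filter fun v => dir v = m) := by
    intro m
    ext x
    simp only [Finset.mem_inter, Finset.mem_insert, Finset.mem_filter, Finset.mem_erase]
    constructor
    · rintro ⟨hx1, hx2⟩
      by_cases hxu : x = u
      · exact Or.inl hxu
      · exact Or.inr ⟨⟨hxu, hx2⟩, (hmem x (Finset.mem_erase.mpr ⟨hxu, hx2⟩) m).mp hx1⟩
    · rintro (rfl | ⟨⟨hxu, hx2⟩, hd⟩)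
      · exact ⟨huL m, hu⟩
      · exact ⟨(hmem x (Finset.mem_erase.mpr ⟨hxu, hx2⟩) m).mpr hd, hx2⟩
  have hcardL : ∀ m, (L m ∩ U).card = ((U.erase u).filter fun v => dir v = m).card + 1 := by
    intro m
    rw [hLU m, Finset.card_insert_of_notMem, add_comm]
    intro h
    exact (Finset.notMem_erase u U) (Finset.mem_of_mem_filter u h)
  have hfib : (U.erase u).card = ∑ m : Option (ZMod p),
      ((U.erase u).filter fun v => dir v = m).card :=
    Finset.card_eq_sum_card_fiberwise (fun x _ => Finset.mem_univ (dir x))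
  have hsum : ∑ m : Option (ZMod p), (L m ∩ U).card = ((U.erase u).card) + (p + 1) := by
    simp_rw [hcardL]
    rw [Finset.sum_add_distrib, ← hfib]
    simp [Fintype.card_option, ZMod.card]
  have hUe : (U.erase u).card = U.card - 1 := Finset.card_erase_of_mem hu
  have hU1 : 1 ≤ U.card := Finset.card_pos.mpr ⟨u, hu⟩
  have hlt : ∑ _m : Option (ZMod p), n < ∑ m : Option (ZMod p), (L m ∩ U).card := by
    rw [hsum, hUe, Finset.sum_const, smul_eq_mul]
    have hcardopt : Fintype.card (Option (ZMod p)) = p + 1 := by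
      simp [Fintype.card_option, ZMod.card]
    rw [Finset.card_univ, hcardopt]
    zify [hU1]
    nlinarith [hcard, hpr]
  obtain ⟨m, -, hm⟩ := Finset.exists_lt_of_sum_lt hlt
  refine ⟨m, c m, huL m, ?_⟩
  unfold IsRich
  have hQ : (U.card : ℚ) = n * p - r := by exact_mod_cast hcard
  have hpQ : (0 : ℚ) < p := by exact_mod_cast hp
  have h1 : (U.card : ℚ) / p ≤ n := by
    rw [div_le_iff₀ hpQ, hQ]
    have : (0 : ℚ) ≤ r := by positivity
    linarith
  have h2 : (n : ℚ) + 1 ≤ ((L m ∩ U).card : ℚ) := by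
    have : n + 1 ≤ (L m ∩ U).card := hm
    exact_mod_cast this
  calc (U.card : ℚ) / p + 1 ≤ (n : ℚ) + 1 := by linarith
    _ ≤ _ := h2
end

section
/- Let p be a prime and U ⊆ F_p^2 with #U = n·p - r, where 1 ≤ n < p and 0 ≤ r < p - n. Let W be the total number of U-rich lines, for each U-rich direction m let w_m be the number of U-rich lines with slope m, let Z be the sum of #(ℓ ∩ U) over all U-rich lines ℓ, and let Q := Σ_m w_m² (sum over all U-rich directions m). Then Z ≤ #U + W²/2 - Q/2 (inequality in ℚ). -/
open Finset Polynomial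

attribute [local instance] Classical.propDecidable

/-- The set of `U`-rich lines, identified with pairs (slope, intercept). -/
noncomputable def richLines (p : ℕ) [NeZero p] (U : Finset (ZMod p × ZMod p)) :
    Finset (Option (ZMod p) × ZMod p) :=
  Finset.univ.filter fun q => IsRich p U (lineWithSlope p q.1 q.2)

/-- The set of `U`-rich directions, as a finset. -/
noncomputable def richDirs (p : ℕ) [NeZero p] (U : Finset (ZMod p × ZMod p)) :
    Finset (Option (ZMod p)) :=
  Finset.univ.filter fun m => IsRichDir p U m

/-- `w_m`: the number of `U`-rich lines with slope `m`. -/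
noncomputable def wSlope (p : ℕ) [NeZero p] (U : Finset (ZMod p × ZMod p))
    (m : Option (ZMod p)) : ℕ :=
  (Finset.univ.filter fun c : ZMod p => IsRich p U (lineWithSlope p m c)).card


lemma mem_lineWithSlope_some {p : ℕ} [NeZero p] {m c : ZMod p} {u : ZMod p × ZMod p} :
    u ∈ lineWithSlope p (some m) c ↔ u.2 = m * u.1 + c := by
  simp [lineWithSlope]

lemma mem_lineWithSlope_none {p : ℕ} [NeZero p] {c : ZMod p} {u : ZMod p × ZMod p} :
    u ∈ lineWithSlope p none c ↔ u.1 = c := by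
  simp [lineWithSlope]

lemma intercept_eq_of_same_slope {p : ℕ} [NeZero p] {m : Option (ZMod p)} {c c' : ZMod p}
    {u : ZMod p × ZMod p} (h : u ∈ lineWithSlope p m c) (h' : u ∈ lineWithSlope p m c') :
    c = c' := by
  cases m with
  | none =>
    rw [mem_lineWithSlope_none] at h h'
    rw [← h, h']
  | some m =>
    rw [mem_lineWithSlope_some] at h h'
    have := h.symm.trans h'
    exact add_left_cancel this

lemma line_eq_of_two_points {p : ℕ} [Fact p.Prime] {q q' : Option (ZMod p) × ZMod p}
    {u v : ZMod p × ZMod p} (huv : u ≠ v)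
    (hu : u ∈ lineWithSlope p q.1 q.2) (hv : v ∈ lineWithSlope p q.1 q.2)
    (hu' : u ∈ lineWithSlope p q'.1 q'.2) (hv' : v ∈ lineWithSlope p q'.1 q'.2) :
    q = q' := by
  obtain ⟨m, c⟩ := q
  obtain ⟨m', c'⟩ := q'
  cases m with
  | none =>
    cases m' with
    | none =>
      rw [mem_lineWithSlope_none] at hu hu'
      exact Prod.ext rfl (hu.symm.trans hu')
    | some m' =>
      rw [mem_lineWithSlope_none] at hu hv
      rw [mem_lineWithSlope_some] at hu' hv'
      exact absurd (Prod.ext (hu.trans hv.symm)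
        (by rw [hu', hv', hu, hv])) huv
  | some m =>
    cases m' with
    | none =>
      rw [mem_lineWithSlope_none] at hu' hv'
      rw [mem_lineWithSlope_some] at hu hv
      exact absurd (Prod.ext (hu'.trans hv'.symm)
        (by rw [hu, hv, hu', hv'])) huv
    | some m' =>
      rw [mem_lineWithSlope_some] at hu hv hu' hv'
      have hne : u.1 ≠ v.1 := by
        intro h1
        exact huv (Prod.ext h1 (by rw [hu, hv, h1]))
      have e1 : m * u.1 + c = m' * u.1 + c' := by rw [← hu, hu']
      have e2 : m * v.1 + c = m' * v.1 + c' := by rw [← hv, hv']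
      have hm : m = m' := by
        have h3 : m * (u.1 - v.1) = m' * (u.1 - v.1) := by linear_combination e1 - e2
        exact mul_right_cancel₀ (sub_ne_zero.2 hne) h3
      have hc : c = c' := by
        rw [hm] at e1
        exact add_left_cancel e1
      rw [hm, hc]

lemma three_mul_le (d : ℕ) : 3 * d ≤ 2 + d * d := by
  rcases d with _ | _ | k
  · simp
  · simp
  · nlinarith

theorem sum_rich_line_lengths (p n r : ℕ) [Fact p.Prime]
    (U : Finset (ZMod p × ZMod p))
    (hn : 1 ≤ n) (hnp : n < p) (hr : r + n < p)
    (hcard : (U.card : ℤ) = n * p - r) :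
    (∑ q ∈ richLines p U, ((lineWithSlope p q.1 q.2 ∩ U).card : ℚ))
      ≤ (U.card : ℚ) + ((richLines p U).card : ℚ) ^ 2 / 2
        - (∑ m ∈ richDirs p U, (wSlope p U m : ℚ) ^ 2) / 2 := by
  classical
  set R := richLines p U with hRdef
  set d : ZMod p × ZMod p → ℕ :=
    fun u => (R.filter fun q => u ∈ lineWithSlope p q.1 q.2).card with hddef
  set T : ZMod p × ZMod p → Finset ((Option (ZMod p) × ZMod p) × (Option (ZMod p) × ZMod p)) :=
    fun u => (R.filter fun q => u ∈ lineWithSlope p q.1 q.2).offDiag with hTdef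
  set S := (R ×ˢ R).filter (fun qq => ¬ qq.2.1 = qq.1.1) with hSdef
  set Sc := (R ×ˢ R).filter (fun qq => qq.2.1 = qq.1.1) with hScdef
  -- Step 1: double counting incidences
  have hZ : ∑ q ∈ R, (lineWithSlope p q.1 q.2 ∩ U).card = ∑ u ∈ U, d u := by
    have h1 : ∀ q : Option (ZMod p) × ZMod p,
        (lineWithSlope p q.1 q.2 ∩ U).card
          = ∑ u ∈ U, if u ∈ lineWithSlope p q.1 q.2 then 1 else 0 := by
      intro q
      rw [Finset.inter_comm, ← Finset.filter_mem_eq_inter, Finset.card_filter]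
    calc ∑ q ∈ R, (lineWithSlope p q.1 q.2 ∩ U).card
        = ∑ q ∈ R, ∑ u ∈ U, if u ∈ lineWithSlope p q.1 q.2 then 1 else 0 :=
          Finset.sum_congr rfl fun q _ => h1 q
      _ = ∑ u ∈ U, ∑ q ∈ R, if u ∈ lineWithSlope p q.1 q.2 then 1 else 0 :=
          Finset.sum_comm
      _ = ∑ u ∈ U, d u := Finset.sum_congr rfl fun u _ => (Finset.card_filter _ _).symm
  -- Step 2: pointwise bound
  have hpt : ∀ u, 2 * d u ≤ 2 + (T u).card := by
    intro u
    have hoff : (T u).card = d u * d u - d u := Finset.offDiag_card _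
    have h3 := three_mul_le (d u)
    obtain ⟨e, he⟩ : ∃ e, e = d u * d u := ⟨_, rfl⟩
    rw [← he] at hoff h3
    omega
  -- Step 3: sum of offDiag cards is at most #S
  have hTsub : ∀ u, T u ⊆ S := by
    intro u qq hqq
    rw [Finset.mem_offDiag] at hqq
    obtain ⟨h1, h2, hne⟩ := hqq
    rw [Finset.mem_filter] at h1 h2
    rw [hSdef, Finset.mem_filter, Finset.mem_product]
    refine ⟨⟨h1.1, h2.1⟩, ?_⟩
    intro heq
    exact hne (Prod.ext heq.symm (intercept_eq_of_same_slope h1.2 (heq ▸ h2.2)))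
  have hdisj : ∀ u ∈ U, ∀ v ∈ U, u ≠ v → Disjoint (T u) (T v) := by
    intro u _ v _ huv
    rw [Finset.disjoint_left]
    intro qq hqu hqv
    rw [Finset.mem_offDiag] at hqu hqv
    obtain ⟨h1, h2, hne⟩ := hqu
    obtain ⟨h1', h2', -⟩ := hqv
    exact hne (line_eq_of_two_points huv (Finset.mem_filter.1 h1).2
      (Finset.mem_filter.1 h1').2 (Finset.mem_filter.1 h2).2 (Finset.mem_filter.1 h2').2)
  have hsumT : ∑ u ∈ U, (T u).card ≤ S.card := by
    rw [← Finset.card_biUnion hdisj]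
    exact Finset.card_le_card (Finset.biUnion_subset.2 fun u _ => hTsub u)
  -- Step 4: counting same-slope pairs
  have hfib : ∀ m : Option (ZMod p), (R.filter fun q => q.1 = m).card = wSlope p U m := by
    intro m
    rw [wSlope]
    apply Finset.card_bij (fun q _ => q.2)
    · intro q hq
      rw [Finset.mem_filter] at hq ⊢
      obtain ⟨hqR, hqm⟩ := hq
      rw [hRdef, richLines, Finset.mem_filter] at hqR
      exact ⟨Finset.mem_univ _, by rw [← hqm]; exact hqR.2⟩
    · intro q hq q' hq' h
      rw [Finset.mem_filter] at hq hq'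
      exact Prod.ext (hq.2.trans hq'.2.symm) h
    · intro c hc
      rw [Finset.mem_filter] at hc
      refine ⟨(m, c), ?_, rfl⟩
      rw [Finset.mem_filter, hRdef, richLines, Finset.mem_filter]
      exact ⟨⟨Finset.mem_univ _, hc.2⟩, rfl⟩
  have hScCard : Sc.card = ∑ m : Option (ZMod p), wSlope p U m * wSlope p U m := by
    rw [hScdef, Finset.card_filter, Finset.sum_product]
    have step1 : ∀ q ∈ R, (∑ q' ∈ R, if (q, q').2.1 = (q, q').1.1 then 1 else 0)
        = wSlope p U q.1 := by
      intro q _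
      rw [show (∑ q' ∈ R, if (q, q').2.1 = (q, q').1.1 then 1 else 0)
          = ∑ q' ∈ R, if q'.1 = q.1 then 1 else 0 from rfl, ← Finset.card_filter, hfib]
    rw [Finset.sum_congr rfl step1,
        ← Finset.sum_fiberwise R (fun q => q.1) (fun q => wSlope p U q.1)]
    refine Finset.sum_congr rfl fun m _ => ?_
    rw [Finset.sum_congr rfl (fun q hq => by rw [(Finset.mem_filter.1 hq).2]),
        Finset.sum_const, smul_eq_mul, hfib]
  have hsplit : S.card + Sc.card = R.card * R.card := by
    rw [hSdef, hScdef, add_comm, Finset.card_filter_add_card_filter_not,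
        Finset.card_product]
  have hQ : ∑ m : Option (ZMod p), wSlope p U m * wSlope p U m
      = ∑ m ∈ richDirs p U, wSlope p U m * wSlope p U m := by
    symm
    apply Finset.sum_subset (Finset.subset_univ _)
    intro m _ hm
    have hw : wSlope p U m = 0 := by
      rw [wSlope, Finset.card_eq_zero, Finset.filter_eq_empty_iff]
      intro c _ hc
      rw [richDirs, Finset.mem_filter] at hm
      exact hm ⟨Finset.mem_univ m, ⟨c, hc⟩⟩
    rw [hw, Nat.mul_zero]
  -- master inequality over ℕ
  have master : 2 * (∑ q ∈ R, (lineWithSlope p q.1 q.2 ∩ U).card)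
      + ∑ m ∈ richDirs p U, wSlope p U m * wSlope p U m
      ≤ 2 * U.card + R.card * R.card := by
    have l1 : 2 * (∑ u ∈ U, d u) ≤ 2 * U.card + ∑ u ∈ U, (T u).card := by
      rw [Finset.mul_sum]
      calc ∑ u ∈ U, 2 * d u ≤ ∑ u ∈ U, (2 + (T u).card) :=
            Finset.sum_le_sum fun u _ => hpt u
        _ = 2 * U.card + ∑ u ∈ U, (T u).card := by
            rw [Finset.sum_add_distrib, Finset.sum_const, smul_eq_mul, mul_comm]
    calc 2 * (∑ q ∈ R, (lineWithSlope p q.1 q.2 ∩ U).card)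
        + ∑ m ∈ richDirs p U, wSlope p U m * wSlope p U m
        = 2 * (∑ u ∈ U, d u) + Sc.card := by rw [hZ, ← hQ, hScCard]
      _ ≤ (2 * U.card + S.card) + Sc.card :=
          Nat.add_le_add_right (l1.trans (Nat.add_le_add_left hsumT _)) _
      _ = 2 * U.card + R.card * R.card := by rw [add_assoc, hsplit]
  have cast : ((2 * (∑ q ∈ R, (lineWithSlope p q.1 q.2 ∩ U).card)
      + ∑ m ∈ richDirs p U, wSlope p U m * wSlope p U m : ℕ) : ℚ)
      ≤ ((2 * U.card + R.card * R.card : ℕ) : ℚ) := Nat.cast_le.2 master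
  push_cast at cast
  have hsq1 : ∑ m ∈ richDirs p U, (wSlope p U m : ℚ) ^ 2
      = ∑ m ∈ richDirs p U, (wSlope p U m : ℚ) * wSlope p U m := by
    refine Finset.sum_congr rfl fun m _ => sq (wSlope p U m : ℚ)
  rw [hsq1, sq]
  linarith
end

section
/- Let p be a prime and U ⊆ F_p^2 with #U = n·p - r, where 1 ≤ n ≤ p and 0 ≤ r < p. If m ∈ F_p ∪ {∞} is a direction that is not U-special, then exactly r of the p lines with slope m meet U in exactly n - 1 points and the remaining p - r lines with slope m meet U in exactly n points; consequently 2·c_m = (n - 1)·(n·p - 2r). -/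
open Finset Polynomial

attribute [local instance] Classical.propDecidable

/-- `c_m`: the number of unordered pairs of distinct points of `U` lying on a common
line with slope `m`. -/
noncomputable def pairsCount (p : ℕ) [NeZero p] (U : Finset (ZMod p × ZMod p))
    (m : Option (ZMod p)) : ℕ :=
  ((U.powersetCard 2).filter fun s => ∃ c : ZMod p, s ⊆ lineWithSlope p m c).card

/-- The "intercept" of the unique line with slope `m` through `q`. -/
noncomputable def cVal (p : ℕ) [NeZero p] (m : Option (ZMod p)) (q : ZMod p × ZMod p) :
    ZMod p :=
  match m with
  | some m => q.2 - m * q.1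
  | none => q.1

lemma mem_lineWithSlope (p : ℕ) [NeZero p] (m : Option (ZMod p)) (c : ZMod p)
    (q : ZMod p × ZMod p) : q ∈ lineWithSlope p m c ↔ cVal p m q = c := by
  cases m with
  | none => simp [lineWithSlope, cVal]
  | some m => simp [lineWithSlope, cVal, sub_eq_iff_eq_add']

lemma two_mul_choose_two (k : ℕ) : 2 * k.choose 2 = k * (k - 1) := by
  induction k with
  | zero => rfl
  | succ b ih =>
    rw [Nat.choose_succ_succ, Nat.mul_add, ih, Nat.choose_one_right, Nat.succ_sub_one]
    cases b with
    | zero => rfl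
    | succ m => simp [Nat.succ_sub_one]; ring

lemma choose_cast_int (a : ℕ) : ((2 * a.choose 2 : ℕ) : ℤ) = (a : ℤ) * ((a : ℤ) - 1) := by
  rw [two_mul_choose_two]
  cases a with
  | zero => simp
  | succ b => push_cast [Nat.succ_sub_one]; ring

theorem generic_direction_counts (p n r : ℕ) [Fact p.Prime]
    (U : Finset (ZMod p × ZMod p))
    (hn : 1 ≤ n) (hnp : n ≤ p) (hr : r < p)
    (hcard : (U.card : ℤ) = n * p - r)
    (m : Option (ZMod p)) (hm : ¬ IsSpecialDir p U m) :
    ((Finset.univ.filter fun c : ZMod p =>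
        ((lineWithSlope p m c ∩ U).card : ℤ) = (n : ℤ) - 1).card : ℤ) = r ∧
    ((Finset.univ.filter fun c : ZMod p =>
        ((lineWithSlope p m c ∩ U).card : ℤ) = (n : ℤ)).card : ℤ) = (p : ℤ) - r ∧
    2 * (pairsCount p U m : ℤ) = ((n : ℤ) - 1) * ((n : ℤ) * p - 2 * r) := by
  have hp : 0 < p := (Fact.out : p.Prime).pos
  have hpQ : (0:ℚ) < p := by exact_mod_cast hp
  have hpZ : (0:ℤ) < p := by exact_mod_cast hp
  have hrZ : (r:ℤ) < p := by exact_mod_cast hr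
  have hn1 : (1:ℤ) ≤ n := by exact_mod_cast hn
  simp only [IsSpecialDir, not_exists, not_or] at hm
  have hUQ : (U.card : ℚ) = (n:ℚ) * p - r := by exact_mod_cast hcard
  -- each line has n-1 or n points of U
  have hk : ∀ c : ZMod p, ((lineWithSlope p m c ∩ U).card : ℤ) = (n:ℤ) - 1 ∨
      ((lineWithSlope p m c ∩ U).card : ℤ) = (n:ℤ) := by
    intro c
    obtain ⟨hrich, hpoor⟩ := hm c
    rw [IsRich, not_le] at hrich
    rw [IsPoor, not_le] at hpoor
    have h1 : ((lineWithSlope p m c ∩ U).card : ℚ) * p < (U.card : ℚ) + p := by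
      have := mul_lt_mul_of_pos_right hrich hpQ
      rwa [add_mul, one_mul, div_mul_cancel₀ _ (ne_of_gt hpQ)] at this
    have h2 : (U.card : ℚ) - p < ((lineWithSlope p m c ∩ U).card : ℚ) * p := by
      have := mul_lt_mul_of_pos_right hpoor hpQ
      rwa [sub_mul, one_mul, div_mul_cancel₀ _ (ne_of_gt hpQ)] at this
    rw [hUQ] at h1 h2
    have h1' : ((lineWithSlope p m c ∩ U).card : ℤ) * p < (n:ℤ) * p - r + p := by
      exact_mod_cast h1
    have h2' : (n:ℤ) * p - r - p < ((lineWithSlope p m c ∩ U).card : ℤ) * p := by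
      exact_mod_cast h2
    have hle : ((lineWithSlope p m c ∩ U).card : ℤ) < n + 1 := by
      have h3 : ((lineWithSlope p m c ∩ U).card : ℤ) * p < ((n:ℤ) + 1) * p := by nlinarith
      exact lt_of_mul_lt_mul_right h3 (le_of_lt hpZ)
    have hge : (n:ℤ) - 2 < ((lineWithSlope p m c ∩ U).card : ℤ) := by
      have h3 : ((n:ℤ) - 2) * p < ((lineWithSlope p m c ∩ U).card : ℤ) * p := by nlinarith
      exact lt_of_mul_lt_mul_right h3 (le_of_lt hpZ)
    omega
  -- the lines with slope m partition the plane
  have hline_eq : ∀ c : ZMod p, lineWithSlope p m c ∩ U = U.filter fun q => cVal p m q = c := by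
    intro c
    ext q
    simp [mem_lineWithSlope, Finset.mem_filter, Finset.mem_inter, and_comm]
  have hsumN : ∑ c : ZMod p, (lineWithSlope p m c ∩ U).card = U.card := by
    simp only [hline_eq]
    exact (Finset.card_eq_sum_card_fiberwise fun q _ => Finset.mem_univ (cVal p m q)).symm
  have hsum : ∑ c : ZMod p, ((lineWithSlope p m c ∩ U).card : ℤ) = (n:ℤ) * p - r := by
    rw [← hcard]
    exact_mod_cast congrArg (Nat.cast : ℕ → ℤ) hsumN
  set A := Finset.univ.filter fun c : ZMod p =>
      ((lineWithSlope p m c ∩ U).card : ℤ) = (n : ℤ) - 1 with hAdef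
  set B := Finset.univ.filter fun c : ZMod p =>
      ((lineWithSlope p m c ∩ U).card : ℤ) = (n : ℤ) with hBdef
  have hdisj : Disjoint A B := by
    rw [Finset.disjoint_left]
    intro c hcA hcB
    have h1 := (Finset.mem_filter.1 hcA).2
    have h2 := (Finset.mem_filter.1 hcB).2
    omega
  have hunion : A ∪ B = Finset.univ := by
    ext c
    simp only [Finset.mem_union, hAdef, hBdef, Finset.mem_filter, Finset.mem_univ, true_and]
    simpa using hk c
  have hABcard : (A.card : ℤ) + B.card = p := by
    have := Finset.card_union_of_disjoint hdisj
    rw [hunion, Finset.card_univ, ZMod.card] at this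
    exact_mod_cast this.symm
  have hsA : ∑ c ∈ A, ((lineWithSlope p m c ∩ U).card : ℤ) = A.card * ((n:ℤ) - 1) := by
    rw [Finset.sum_congr rfl fun c hc => (Finset.mem_filter.1 hc).2, Finset.sum_const,
      nsmul_eq_mul]
  have hsB : ∑ c ∈ B, ((lineWithSlope p m c ∩ U).card : ℤ) = B.card * (n:ℤ) := by
    rw [Finset.sum_congr rfl fun c hc => (Finset.mem_filter.1 hc).2, Finset.sum_const,
      nsmul_eq_mul]
  have heq1 : (A.card : ℤ) * ((n:ℤ) - 1) + (B.card : ℤ) * n = (n:ℤ) * p - r := by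
    rw [← hsA, ← hsB, ← Finset.sum_union hdisj, hunion]
    exact hsum
  have hAr : (A.card : ℤ) = r := by linear_combination (n:ℤ) * hABcard - heq1
  have hBr : (B.card : ℤ) = (p:ℤ) - r := by linarith
  refine ⟨hAr, hBr, ?_⟩
  -- pairs count
  have hpc : pairsCount p U m = ∑ c : ZMod p, ((lineWithSlope p m c ∩ U).card).choose 2 := by
    rw [pairsCount]
    have hset : ((U.powersetCard 2).filter fun s => ∃ c : ZMod p, s ⊆ lineWithSlope p m c)
        = Finset.univ.biUnion fun c : ZMod p => (lineWithSlope p m c ∩ U).powersetCard 2 := by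
      ext s
      simp only [Finset.mem_filter, Finset.mem_powersetCard, Finset.mem_biUnion,
        Finset.mem_univ, true_and]
      constructor
      · rintro ⟨⟨hsU, hs2⟩, c, hsc⟩
        exact ⟨c, fun q hq => Finset.mem_inter.2 ⟨hsc hq, hsU hq⟩, hs2⟩
      · rintro ⟨c, hsub, hs2⟩
        exact ⟨⟨fun q hq => (Finset.mem_inter.1 (hsub hq)).2, hs2⟩,
          c, fun q hq => (Finset.mem_inter.1 (hsub hq)).1⟩
    rw [hset, Finset.card_biUnion, Finset.sum_congr rfl
      fun c _ => Finset.card_powersetCard 2 _]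
    intro x _ y _ hxy
    rw [Function.onFun, Finset.disjoint_left]
    intro s hs hs'
    rw [Finset.mem_powersetCard] at hs hs'
    obtain ⟨q, hq⟩ := Finset.card_pos.mp (by rw [hs.2]; norm_num)
    have h1 := (Finset.mem_inter.1 (hs.1 hq)).1
    have h2 := (Finset.mem_inter.1 (hs'.1 hq)).1
    rw [mem_lineWithSlope] at h1 h2
    exact hxy (h1.symm.trans h2)
  have h2pc : 2 * (pairsCount p U m : ℤ)
      = ∑ c : ZMod p, ((lineWithSlope p m c ∩ U).card : ℤ)
          * (((lineWithSlope p m c ∩ U).card : ℤ) - 1) := by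
    rw [hpc]
    push_cast
    rw [Finset.mul_sum]
    refine Finset.sum_congr rfl fun c _ => ?_
    have := choose_cast_int ((lineWithSlope p m c ∩ U).card)
    push_cast at this
    linarith
  rw [h2pc, ← hunion, Finset.sum_union hdisj]
  have hsA2 : ∑ c ∈ A, ((lineWithSlope p m c ∩ U).card : ℤ)
      * (((lineWithSlope p m c ∩ U).card : ℤ) - 1) = A.card * (((n:ℤ) - 1) * ((n:ℤ) - 1 - 1)) := by
    rw [Finset.sum_congr rfl fun c hc => by rw [(Finset.mem_filter.1 hc).2],
      Finset.sum_const, nsmul_eq_mul]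
  have hsB2 : ∑ c ∈ B, ((lineWithSlope p m c ∩ U).card : ℤ)
      * (((lineWithSlope p m c ∩ U).card : ℤ) - 1) = B.card * ((n:ℤ) * ((n:ℤ) - 1)) := by
    rw [Finset.sum_congr rfl fun c hc => by rw [(Finset.mem_filter.1 hc).2],
      Finset.sum_const, nsmul_eq_mul]
  rw [hsA2, hsB2, hAr, hBr]
  ring
end

section
/- Let p be a prime, U ⊆ F_p^2 nonempty and finite, and n ∈ ℕ with #U ≤ n·p. If m ∈ F_p is not a U-rich direction, then the specialization at y = m of the Rédei–Szőnyi polynomial satisfies H_{U,n}(x, m) = (x^p - x)^n in F_p[x]. -/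
open Finset Polynomial

attribute [local instance] Classical.propDecidable

/-- The Rédei polynomial of `U`, as a polynomial in `x` over `F_p[y]`. -/
noncomputable def redei (p : ℕ) (U : Finset (ZMod p × ZMod p)) :
    Polynomial (Polynomial (ZMod p)) :=
  ∏ q ∈ U, (Polynomial.X - Polynomial.C (Polynomial.C q.1 * Polynomial.X)
      + Polynomial.C (Polynomial.C q.2))

/-- The (n-th generalized) Szőnyi complement: the quotient of the division of
`(x^p - x)^n` by the Rédei polynomial in `(F_p[y])[x]`. -/
noncomputable def szonyi (p n : ℕ) (U : Finset (ZMod p × ZMod p)) :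
    Polynomial (Polynomial (ZMod p)) :=
  ((Polynomial.X ^ p - Polynomial.X) ^ n) /ₘ redei p U

/-- The Rédei–Szőnyi polynomial `H_{U,n} = R_U · S_{U,n}`. -/
noncomputable def RS (p n : ℕ) (U : Finset (ZMod p × ZMod p)) :
    Polynomial (Polynomial (ZMod p)) :=
  redei p U * szonyi p n U

theorem RS_eval_at_nonrich (p n : ℕ) [Fact p.Prime]
    (U : Finset (ZMod p × ZMod p)) (hU : U.Nonempty) (hcard : U.card ≤ n * p)
    (m : ZMod p) (hm : ¬ IsRichDir p U (some m)) :
    Polynomial.map (Polynomial.evalRingHom m) (RS p n U)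
      = (Polynomial.X ^ p - Polynomial.X) ^ n := by

  classical
  set φ := Polynomial.evalRingHom m with hφ
  -- the Rédei polynomial is monic
  have hmonic : (redei p U).Monic := by
    apply monic_prod_of_monic
    intro q _
    have h : (X : Polynomial (Polynomial (ZMod p))) - C (C q.1 * X) + C (C q.2)
        = X - C (C q.1 * X - C q.2) := by
      rw [map_sub]; ring
    rw [h]
    exact monic_X_sub_C _
  -- the specialized Rédei polynomial
  have hmapR : (redei p U).map φ = ∏ q ∈ U, (X - C (q.1 * m - q.2)) := by
    rw [redei, Polynomial.map_prod]
    refine Finset.prod_congr rfl fun q _ => ?_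
    simp only [Polynomial.map_add, Polynomial.map_sub, Polynomial.map_X, Polynomial.map_C,
      hφ, coe_evalRingHom, eval_mul, eval_C, eval_X]
    rw [map_sub]; ring
  -- fiber cards are at most n
  have hfiber : ∀ c : ZMod p, (U.filter fun q => q.1 * m - q.2 = c).card ≤ n := by
    intro c
    have hline : U.filter (fun q => q.1 * m - q.2 = c)
        = lineWithSlope p (some m) (-c) ∩ U := by
      ext q
      simp only [Finset.mem_filter, lineWithSlope, Finset.mem_inter, Finset.mem_univ,
        true_and]
      constructor
      · rintro ⟨hq, h⟩; exact ⟨by linear_combination -h, hq⟩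
      · rintro ⟨h, hq⟩; exact ⟨hq, by linear_combination -h⟩
    have hnr : ¬ IsRich p U (lineWithSlope p (some m) (-c)) := fun h => hm ⟨-c, h⟩
    rw [IsRich, not_le] at hnr
    rw [hline]
    have hp0 : (0 : ℚ) < p := by
      exact_mod_cast (Fact.out : p.Prime).pos
    have hθ : (U.card : ℚ) / p ≤ n := by
      rw [div_le_iff₀ hp0]
      exact_mod_cast hcard
    have : ((lineWithSlope p (some m) (-c) ∩ U).card : ℚ) < (n : ℚ) + 1 :=
      lt_of_lt_of_le hnr (by linarith)
    exact_mod_cast Nat.lt_succ_iff.mp (by exact_mod_cast this)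
  -- the specialized Rédei polynomial divides (X^p - X)^n
  have hdvd : (redei p U).map φ ∣ (X ^ p - X : Polynomial (ZMod p)) ^ n := by
    rw [hmapR]
    have hfib : (∏ q ∈ U, ((X : Polynomial (ZMod p)) - C (q.1 * m - q.2)))
        = ∏ c : ZMod p, (X - C c) ^ (U.filter fun q => q.1 * m - q.2 = c).card := by
      rw [← Finset.prod_fiberwise' U (fun q => q.1 * m - q.2) (fun c => X - C c)]
      exact Finset.prod_congr rfl fun c _ => (Finset.prod_const _)
    rw [hfib]
    have h1 : (∏ c : ZMod p, ((X : Polynomial (ZMod p)) - C c) ^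
          (U.filter fun q => q.1 * m - q.2 = c).card)
        ∣ ∏ c : ZMod p, (X - C c) ^ n :=
      Finset.prod_dvd_prod_of_dvd _ _ fun c _ => pow_dvd_pow _ (hfiber c)
    refine h1.trans ?_
    rw [Finset.prod_pow]
    have h2 : (∏ c : ZMod p, ((X : Polynomial (ZMod p)) - C c)) ∣ X ^ p - X := by
      have h3 : ((X : Polynomial (ZMod p)) ^ p - X).roots = Finset.univ.val := by
        have := FiniteField.roots_X_pow_card_sub_X (ZMod p)
        rwa [ZMod.card] at this
      have h4 := Polynomial.prod_multiset_X_sub_C_dvd ((X : Polynomial (ZMod p)) ^ p - X)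
      rw [h3] at h4
      exact h4
    exact pow_dvd_pow_of_dvd h2 n
  -- the division identity, specialized
  have hdivn := modByMonic_add_div ((X ^ p - X : Polynomial (Polynomial (ZMod p))) ^ n) (redei p U)
  have hmapped := congrArg (Polynomial.map φ) hdivn
  rw [Polynomial.map_add, Polynomial.map_mul, Polynomial.map_pow, Polynomial.map_sub,
    Polynomial.map_pow, Polynomial.map_X] at hmapped
  set T := (((X ^ p - X : Polynomial (Polynomial (ZMod p))) ^ n) %ₘ redei p U).map φ with hT
  have hRdvdT : (redei p U).map φ ∣ T := by
    have : T = (X ^ p - X : Polynomial (ZMod p)) ^ n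
        - (redei p U).map φ * (((X ^ p - X : Polynomial (Polynomial (ZMod p))) ^ n)
            /ₘ redei p U).map φ := by
      rw [← hmapped]; ring
    rw [this]
    exact dvd_sub hdvd (Dvd.intro _ rfl)
  have hTdeg : T.degree < ((redei p U).map φ).degree := by
    rw [hmonic.degree_map φ]
    exact lt_of_le_of_lt Polynomial.degree_map_le
      (degree_modByMonic_lt _ hmonic)
  have hT0 : T = 0 := eq_zero_of_dvd_of_degree_lt hRdvdT hTdeg
  rw [RS, Polynomial.map_mul]
  rw [hT0, zero_add] at hmapped
  exact hmapped
end

section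
/- Let p be a prime and U ⊆ F_p^2 with (n - 1)·p < #U ≤ n·p for some n ∈ ℕ. If m ∈ F_p is not a U-special direction, then for every natural number α ≤ n, the polynomial (x^p - x)^{n-α} divides the specialization at y = m of the α-th partial derivative ∂^α H_{U,n}/∂y^α, as polynomials in F_p[x]. -/
open Finset Polynomial

attribute [local instance] Classical.propDecidable

/-- The `y`-derivative of a bivariate polynomial in `(F_p[y])[x]`: differentiate
each `x`-coefficient with respect to `y`. -/
noncomputable def dY {R : Type*} [CommSemiring R]
    (H : Polynomial (Polynomial R)) : Polynomial (Polynomial R) :=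
  H.sum fun i c => Polynomial.C (Polynomial.derivative c) * Polynomial.X ^ i

/-! ### Auxiliary machinery -/

lemma dY_coeff {R : Type*} [CommSemiring R] (H : Polynomial (Polynomial R)) (i : ℕ) :
    (dY H).coeff i = Polynomial.derivative (H.coeff i) := by
  rw [dY, Polynomial.sum, finset_sum_coeff]
  simp only [coeff_C_mul, coeff_X_pow, mul_ite, mul_one, mul_zero]
  rw [Finset.sum_ite_eq H.support i (fun j => Polynomial.derivative (H.coeff j))]
  by_cases h : i ∈ H.support
  · simp [h]
  · simp [h, Polynomial.notMem_support_iff.mp h]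

lemma dY_iterate_coeff {R : Type*} [CommSemiring R] (α : ℕ)
    (H : Polynomial (Polynomial R)) (i : ℕ) :
    (dY^[α] H).coeff i = (Polynomial.derivative (R := R))^[α] (H.coeff i) := by
  induction α generalizing H with
  | zero => simp
  | succ k ih =>
    rw [Function.iterate_succ_apply, Function.iterate_succ_apply, ih, dY_coeff]

/-- Swap of the two variables `R[y][x] → R[x][y]`. -/
noncomputable def swapPoly {R : Type*} [CommSemiring R] :
    Polynomial (Polynomial R) →+* Polynomial (Polynomial R) :=
  Polynomial.eval₂RingHom
    (Polynomial.eval₂RingHom (Polynomial.C.comp Polynomial.C) Polynomial.X)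
    (Polynomial.C Polynomial.X)

lemma swapPoly_C_C {R : Type*} [CommSemiring R] (r : R) :
    swapPoly (Polynomial.C (Polynomial.C r)) = Polynomial.C (Polynomial.C r) := by
  simp [swapPoly]

lemma swapPoly_C_X {R : Type*} [CommSemiring R] :
    swapPoly (Polynomial.C (Polynomial.X) : Polynomial (Polynomial R)) = Polynomial.X := by
  simp [swapPoly]

lemma swapPoly_X {R : Type*} [CommSemiring R] :
    swapPoly (Polynomial.X : Polynomial (Polynomial R)) = Polynomial.C Polynomial.X := by
  simp [swapPoly]

lemma swapPoly_coeff {R : Type*} [CommSemiring R] (P : Polynomial (Polynomial R))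
    (i j : ℕ) : ((swapPoly P).coeff j).coeff i = (P.coeff i).coeff j := by
  induction P using Polynomial.induction_on' with
  | add p q hp hq => simp [map_add, hp, hq]
  | monomial k f =>
    induction f using Polynomial.induction_on' with
    | add u v hu hv =>
      rw [(monomial k).map_add, map_add]
      simp only [coeff_add] at hu hv ⊢
      rw [hu, hv]
    | monomial l r =>
      have h0 : (monomial k (monomial l r) : Polynomial (Polynomial R))
          = (Polynomial.C (Polynomial.C r)) * (Polynomial.C Polynomial.X) ^ l
            * Polynomial.X ^ k := by
        rw [← C_mul_X_pow_eq_monomial, ← C_mul_X_pow_eq_monomial, ← C_pow, ← C_mul]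
      rw [h0, map_mul, map_mul, map_pow, map_pow, swapPoly_C_C, swapPoly_C_X, swapPoly_X,
        ← C_pow]
      rw [mul_assoc, mul_comm (Polynomial.X ^ l) _, ← mul_assoc, ← C_mul]
      rw [show (Polynomial.C (Polynomial.C r) * Polynomial.C Polynomial.X ^ l
          * Polynomial.X ^ k : Polynomial (Polynomial R))
        = Polynomial.C (Polynomial.C r * Polynomial.X ^ l) * Polynomial.X ^ k by
          rw [← C_pow, ← C_mul]]
      simp only [coeff_C_mul, coeff_X_pow, mul_ite, mul_one, mul_zero, apply_ite
        (fun q : Polynomial R => q.coeff i), apply_ite (fun q : Polynomial R => q.coeff j),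
        coeff_zero]
      split_ifs <;> simp

/-- `P` lies in the ideal `(g, z)^k`, expressed coefficientwise. -/
def Dp {A : Type*} [CommSemiring A] (g : A) (k : ℕ) (P : Polynomial A) : Prop :=
  ∀ α : ℕ, g ^ (k - α) ∣ P.coeff α

lemma Dp_zero {A : Type*} [CommSemiring A] (g : A) (P : Polynomial A) : Dp g 0 P := by
  intro α; simp

lemma Dp.mul {A : Type*} [CommSemiring A] {g : A} {j k : ℕ} {P Q : Polynomial A}
    (hP : Dp g j P) (hQ : Dp g k Q) : Dp g (j + k) (P * Q) := by
  intro α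
  rw [coeff_mul]
  refine Finset.dvd_sum fun x hx => ?_
  rw [Finset.HasAntidiagonal.mem_antidiagonal] at hx
  have h1 : g ^ (j + k - α) ∣ g ^ ((j - x.1) + (k - x.2)) := pow_dvd_pow _ (by omega)
  exact h1.trans (by rw [pow_add]; exact mul_dvd_mul (hP x.1) (hQ x.2))

lemma Dp.prod {A : Type*} [CommSemiring A] {g : A} {ι : Type*} (s : Finset ι)
    (k : ι → ℕ) (f : ι → Polynomial A) (h : ∀ i ∈ s, Dp g (k i) (f i)) :
    Dp g (∑ i ∈ s, k i) (∏ i ∈ s, f i) := by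
  induction s using Finset.cons_induction with
  | empty => simpa using Dp_zero g 1
  | cons a s ha ih =>
    rw [Finset.prod_cons, Finset.sum_cons]
    exact (h a (Finset.mem_cons_self a s)).mul (ih fun i hi => h i (Finset.mem_cons_of_mem hi))

/-- The Taylor-shift ring homomorphism `f(y) ↦ f(y + m)`. -/
noncomputable def tauHom {R : Type*} [CommSemiring R] (m : R) :
    Polynomial R →+* Polynomial R :=
  Polynomial.eval₂RingHom Polynomial.C (Polynomial.X + Polynomial.C m)

lemma tauHom_apply {R : Type*} [CommSemiring R] (m : R) (f : Polynomial R) :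
    tauHom m f = f.comp (X + C m) := rfl

lemma tauHom_coeff_zero {R : Type*} [CommSemiring R] (m : R) (f : Polynomial R) :
    (tauHom m f).coeff 0 = f.eval m := by
  rw [tauHom_apply, coeff_zero_eq_eval_zero, eval_comp]
  simp

lemma eval_iterate_deriv {R : Type*} [CommSemiring R] (m : R) (f : Polynomial R) (α : ℕ) :
    Polynomial.eval m ((Polynomial.derivative (R := R))^[α] f)
      = (α.factorial : R) * (tauHom m f).coeff α := by
  have h1 : (tauHom m f).coeff α = (Polynomial.taylor m f).coeff α := rfl
  rw [h1, Polynomial.taylor_coeff, ← Polynomial.factorial_smul_hasseDeriv]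
  simp [nsmul_eq_mul]

/-- Swap + Taylor shift of a Rédei factor. -/
lemma swap_factor {R : Type*} [CommRing R] (a b m : R) :
    swapPoly ((Polynomial.X + Polynomial.C (Polynomial.C b - Polynomial.C a
        * Polynomial.X)).map (tauHom m))
      = Polynomial.C (Polynomial.X + Polynomial.C (b - m * a))
        - Polynomial.C (Polynomial.C a) * Polynomial.X := by
  simp only [tauHom, swapPoly, Polynomial.map_add, Polynomial.map_sub, Polynomial.map_mul,
    Polynomial.map_X, Polynomial.map_C, coe_eval₂RingHom, eval₂_sub, eval₂_mul, eval₂_add,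
    eval₂_C, eval₂_X, map_sub, map_mul, map_add, RingHom.comp_apply]
  ring

/-! ### Combinatorial facts about non-special directions -/

lemma line_inter (p : ℕ) [NeZero p] (m c : ZMod p) (U : Finset (ZMod p × ZMod p)) :
    (lineWithSlope p (some m) c) ∩ U = U.filter fun q => q.2 - m * q.1 = c := by
  ext q
  simp only [lineWithSlope, Finset.mem_inter, Finset.mem_filter, Finset.mem_univ, true_and,
    sub_eq_iff_eq_add, add_comm c (m * q.1)]
  tauto

lemma t_bounds (p n : ℕ) [Fact p.Prime] (U : Finset (ZMod p × ZMod p))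
    (h1 : (n - 1) * p < U.card) (h2 : U.card ≤ n * p)
    (m : ZMod p) (hm : ¬ IsSpecialDir p U (some m)) (hn : 1 ≤ n) (c : ZMod p) :
    n - 1 ≤ (U.filter fun q => q.2 - m * q.1 = c).card
      ∧ (U.filter fun q => q.2 - m * q.1 = c).card ≤ n := by
  rw [IsSpecialDir] at hm
  push_neg at hm
  obtain ⟨hrich, hpoor⟩ := hm c
  rw [IsRich, line_inter] at hrich
  rw [IsPoor, line_inter] at hpoor
  push_neg at hrich hpoor
  set t := (U.filter fun q => q.2 - m * q.1 = c).card with ht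
  have hp0 : (0 : ℚ) < p := by exact_mod_cast (Fact.out : p.Prime).pos
  have hub : (U.card : ℚ) / p ≤ n := by
    rw [div_le_iff₀ hp0]
    exact_mod_cast h2
  have hlb : ((n : ℚ) - 1) < (U.card : ℚ) / p := by
    rw [lt_div_iff₀ hp0]
    have : (((n - 1) * p : ℕ) : ℚ) < U.card := by exact_mod_cast h1
    rwa [Nat.cast_mul, Nat.cast_sub hn, Nat.cast_one] at this
  constructor
  · have h3 : (n : ℚ) < t + 2 := by linarith
    have : n < t + 2 := by exact_mod_cast h3
    omega
  · have h3 : (t : ℚ) < n + 1 := by linarith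
    have : t < n + 1 := by exact_mod_cast h3
    omega

/-! ### Specialization facts -/

lemma redei_eq (p : ℕ) [Fact p.Prime] (U : Finset (ZMod p × ZMod p)) :
    redei p U = ∏ q ∈ U, (Polynomial.X
      + Polynomial.C (Polynomial.C q.2 - Polynomial.C q.1 * Polynomial.X)) := by
  refine Finset.prod_congr rfl fun q _ => ?_
  rw [map_sub]
  ring

lemma redei_monic (p : ℕ) [Fact p.Prime] (U : Finset (ZMod p × ZMod p)) :
    (redei p U).Monic := by
  rw [redei_eq]
  exact monic_prod_of_monic _ _ fun q _ => monic_X_add_C _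

lemma prod_linear (p : ℕ) [Fact p.Prime] :
    ∏ e : ZMod p, (Polynomial.X - Polynomial.C e)
      = (Polynomial.X ^ p - Polynomial.X : Polynomial (ZMod p)) := by
  have hp : 1 < p := (Fact.out : p.Prime).one_lt
  have hcard : Fintype.card (ZMod p) = p := ZMod.card p
  have hroots : ((Polynomial.X ^ p - Polynomial.X : Polynomial (ZMod p))).roots
      = (Finset.univ.val : Multiset (ZMod p)) := by
    have := FiniteField.roots_X_pow_card_sub_X (ZMod p)
    rwa [hcard] at this
  have hmonic : (Polynomial.X ^ p - Polynomial.X : Polynomial (ZMod p)).Monic := by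
    apply Polynomial.monic_X_pow_sub
    calc Polynomial.degree (Polynomial.X : Polynomial (ZMod p)) ≤ 1 := Polynomial.degree_X_le
    _ < (p : WithBot ℕ) := by exact_mod_cast hp
  have hdeg : (Polynomial.X ^ p - Polynomial.X : Polynomial (ZMod p)).natDegree = p :=
    FiniteField.X_pow_card_sub_X_natDegree_eq _ hp
  have := Polynomial.prod_multiset_X_sub_C_of_monic_of_roots_card_eq hmonic
    (by rw [hroots, hdeg]; simpa using hcard)
  rw [hroots] at this
  rw [← this, Finset.prod_eq_multiset_prod]

lemma prod_linear' (p : ℕ) [Fact p.Prime] :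
    ∏ c : ZMod p, (Polynomial.X + Polynomial.C c)
      = (Polynomial.X ^ p - Polynomial.X : Polynomial (ZMod p)) := by
  rw [← prod_linear p]
  refine Fintype.prod_equiv (Equiv.neg (ZMod p)) _ _ fun c => ?_
  simp [sub_neg_eq_add]

lemma map_redei (p : ℕ) [Fact p.Prime] (U : Finset (ZMod p × ZMod p)) (m : ZMod p) :
    (redei p U).map (Polynomial.evalRingHom m)
      = ∏ c : ZMod p, (Polynomial.X + Polynomial.C c) ^
          (U.filter fun q => q.2 - m * q.1 = c).card := by
  classical
  rw [redei_eq, Polynomial.map_prod]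
  have h1 : ∀ q : ZMod p × ZMod p,
      (Polynomial.X + Polynomial.C (Polynomial.C q.2 - Polynomial.C q.1
        * Polynomial.X)).map (Polynomial.evalRingHom m)
      = Polynomial.X + Polynomial.C (q.2 - m * q.1) := by
    intro q
    rw [Polynomial.map_add, Polynomial.map_X, Polynomial.map_C]
    congr 1
    rw [coe_evalRingHom, eval_sub, eval_mul, eval_C, eval_C, eval_X, mul_comm]
  calc ∏ q ∈ U, (Polynomial.X + Polynomial.C (Polynomial.C q.2 - Polynomial.C q.1
          * Polynomial.X)).map (Polynomial.evalRingHom m)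
      = ∏ q ∈ U, (Polynomial.X + Polynomial.C (q.2 - m * q.1)) :=
        Finset.prod_congr rfl fun q _ => h1 q
    _ = ∏ c : ZMod p, ∏ q ∈ U.filter fun q => q.2 - m * q.1 = c,
          (Polynomial.X + Polynomial.C (q.2 - m * q.1)) :=
        (Finset.prod_fiberwise_of_maps_to (fun q _ => Finset.mem_univ _) _).symm
    _ = ∏ c : ZMod p, (Polynomial.X + Polynomial.C c) ^
          (U.filter fun q => q.2 - m * q.1 = c).card := by
        refine Finset.prod_congr rfl fun c _ => ?_
        rw [← Finset.prod_const]
        refine Finset.prod_congr rfl fun q hq => ?_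
        rw [Finset.mem_filter] at hq
        rw [hq.2]

lemma map_szonyi (p n : ℕ) [Fact p.Prime] (U : Finset (ZMod p × ZMod p)) (m : ZMod p)
    (ht : ∀ c : ZMod p, (U.filter fun q => q.2 - m * q.1 = c).card ≤ n) :
    (szonyi p n U).map (Polynomial.evalRingHom m)
      = ∏ c : ZMod p, (Polynomial.X + Polynomial.C c) ^
          (n - (U.filter fun q => q.2 - m * q.1 = c).card) := by
  have hmonic := redei_monic p U
  have hmap : (szonyi p n U).map (Polynomial.evalRingHom m)
      = ((Polynomial.X ^ p - Polynomial.X) ^ n : Polynomial (ZMod p))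
        /ₘ ((redei p U).map (Polynomial.evalRingHom m)) := by
    rw [szonyi, Polynomial.map_divByMonic _ hmonic]
    congr 1
    rw [Polynomial.map_pow, Polynomial.map_sub, Polynomial.map_pow, Polynomial.map_X]
  have hmonic' : (∏ c : ZMod p, (Polynomial.X + Polynomial.C c) ^
      (U.filter (fun q : ZMod p × ZMod p => q.2 - m * q.1 = c)).card).Monic :=
    monic_prod_of_monic _ _ fun c _ => (monic_X_add_C c).pow _
  have hkey : (∏ c : ZMod p, (Polynomial.X + Polynomial.C c) ^
        (U.filter fun q => q.2 - m * q.1 = c).card)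
      * (∏ c : ZMod p, (Polynomial.X + Polynomial.C c) ^
        (n - (U.filter fun q => q.2 - m * q.1 = c).card))
      = ((Polynomial.X ^ p - Polynomial.X) ^ n : Polynomial (ZMod p)) := by
    rw [← Finset.prod_mul_distrib]
    have h2 : ∀ c : ZMod p, (Polynomial.X + Polynomial.C c) ^
          (U.filter fun q => q.2 - m * q.1 = c).card
        * (Polynomial.X + Polynomial.C c) ^
          (n - (U.filter fun q => q.2 - m * q.1 = c).card)
        = (Polynomial.X + Polynomial.C c) ^ n := fun c => by
      rw [← pow_add]
      congr 1
      have := ht c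
      omega
    rw [Finset.prod_congr rfl fun c _ => h2 c, Finset.prod_pow, prod_linear']
  rw [hmap, map_redei, ← hkey, mul_divByMonic_cancel_left _ hmonic']

theorem RS_y_derivative_divisibility (p n : ℕ) [Fact p.Prime]
    (U : Finset (ZMod p × ZMod p))
    (h1 : (n - 1) * p < U.card) (h2 : U.card ≤ n * p)
    (m : ZMod p) (hm : ¬ IsSpecialDir p U (some m))
    (α : ℕ) (hα : α ≤ n) :
    (Polynomial.X ^ p - Polynomial.X) ^ (n - α)
      ∣ Polynomial.map (Polynomial.evalRingHom m) (dY^[α] (RS p n U)) := by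
  classical
  have hn : 1 ≤ n := by
    rcases Nat.eq_zero_or_pos n with rfl | h
    · simp only [Nat.zero_sub, zero_mul, Nat.zero_mul] at h1 h2
      omega
    · exact h
  have hts : ∀ c : ZMod p, n - 1 ≤ (U.filter fun q => q.2 - m * q.1 = c).card
      ∧ (U.filter fun q => q.2 - m * q.1 = c).card ≤ n :=
    fun c => t_bounds p n U h1 h2 m hm hn c
  set H := RS p n U with hH
  set Hm := swapPoly (H.map (tauHom m)) with hHm
  -- Step 1: rewrite the goal via the swap of the Taylor shift.
  have hkey : Polynomial.map (Polynomial.evalRingHom m) (dY^[α] H)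
      = Polynomial.C ((α.factorial : ZMod p)) * Hm.coeff α := by
    ext i
    rw [coeff_map, dY_iterate_coeff, coeff_C_mul, hHm, swapPoly_coeff, coeff_map]
    exact eval_iterate_deriv m (H.coeff i) α
  rw [hkey]
  refine Dvd.dvd.mul_left ?_ _
  -- Step 2: the specialization of the Szőnyi complement at `y = m`.
  have hswapS : (swapPoly ((szonyi p n U).map (tauHom m))).coeff 0
      = (szonyi p n U).map (Polynomial.evalRingHom m) := by
    ext i
    rw [swapPoly_coeff, coeff_map, coeff_map]
    exact tauHom_coeff_zero m _
  -- Step 3: the local vanishing at each `e`.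
  have hDp : ∀ e : ZMod p, Dp (Polynomial.X - Polynomial.C e) n Hm := by
    intro e
    set t := (U.filter fun q => q.2 - m * q.1 = (-e : ZMod p)).card with htd
    have hHm_eq : Hm = (∏ q ∈ U, (Polynomial.C (Polynomial.X
          + Polynomial.C (q.2 - m * q.1)) - Polynomial.C (Polynomial.C q.1) * Polynomial.X))
        * swapPoly ((szonyi p n U).map (tauHom m)) := by
      rw [hHm, hH, RS, Polynomial.map_mul, map_mul, redei_eq, Polynomial.map_prod, map_prod]
      congr 1
      exact Finset.prod_congr rfl fun q _ => swap_factor q.1 q.2 m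
    rw [hHm_eq]
    have hR : Dp (Polynomial.X - Polynomial.C e) t (∏ q ∈ U, (Polynomial.C (Polynomial.X
        + Polynomial.C (q.2 - m * q.1)) - Polynomial.C (Polynomial.C q.1) * Polynomial.X)) := by
      have hsum : (∑ q ∈ U, if q.2 - m * q.1 = (-e : ZMod p) then 1 else 0) = t := by
        rw [htd, Finset.card_filter]
      rw [← hsum]
      refine Dp.prod U _ _ fun q _ => ?_
      by_cases hq : q.2 - m * q.1 = (-e : ZMod p)
      · rw [if_pos hq, hq]
        intro β
        match β with
        | 0 =>
          simp only [Nat.sub_zero, pow_one, coeff_sub, Polynomial.coeff_C_mul,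
            Polynomial.coeff_X_zero, mul_zero, coeff_C, if_pos rfl, sub_zero]
          rw [map_neg, ← sub_eq_add_neg]
          simp
        | (β + 1) => simp
      · rw [if_neg hq]
        exact Dp_zero _ _
    have hS : Dp (Polynomial.X - Polynomial.C e) (n - t)
        (swapPoly ((szonyi p n U).map (tauHom m))) := by
      intro β
      match β with
      | 0 =>
        rcases Nat.eq_zero_or_pos (n - t) with h0 | h0
        · rw [Nat.sub_zero, h0, pow_zero]
          exact one_dvd _
        · have h1' : n - t - 0 = 1 := by
            have := (hts (-e)).1
            omega
          rw [h1', pow_one, hswapS, map_szonyi p n U m fun c => (hts c).2]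
          have hmem : (Polynomial.X + Polynomial.C (-e : ZMod p)) ^
              (n - (U.filter fun q => q.2 - m * q.1 = (-e : ZMod p)).card)
              ∣ ∏ c : ZMod p, (Polynomial.X + Polynomial.C c) ^
                (n - (U.filter fun q => q.2 - m * q.1 = c).card) :=
            Finset.dvd_prod_of_mem _ (Finset.mem_univ _)
          rw [← htd, show n - t = 1 from h1', pow_one, map_neg, ← sub_eq_add_neg] at hmem
          exact hmem
      | (β + 1) =>
        rw [show n - t - (β + 1) = 0 from by
          have := (hts (-e)).1
          omega, pow_zero]
        exact one_dvd _
    have := hR.mul hS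
    rwa [show t + (n - t) = n from by
      have := (hts (-e)).2
      omega] at this
  -- Step 4: combine over all `e`.
  have hfin : ∀ e : ZMod p, (Polynomial.X - Polynomial.C e) ^ (n - α) ∣ Hm.coeff α :=
    fun e => hDp e α
  have hcop : Pairwise (Function.onFun IsCoprime fun e : ZMod p =>
      (Polynomial.X - Polynomial.C e) ^ (n - α)) := fun e e' hne =>
    ((Polynomial.pairwise_coprime_X_sub_C Function.injective_id) hne).pow
  have hprod : (∏ e : ZMod p, (Polynomial.X - Polynomial.C e) ^ (n - α)) ∣ Hm.coeff α :=
    Fintype.prod_dvd_of_coprime hcop hfin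
  rwa [Finset.prod_pow, prod_linear] at hprod
end

section
/- Let p be a prime and let P, R, S ∈ F_p[x] satisfy P = R·S with R completely reducible. Let P̄ denote the remainder of P upon division by x^p - x (so deg P̄ < p and P ≡ P̄ mod (x^p - x)). Then P divides P'·P̄·S, where P' is the derivative of P. -/
open Polynomial

/-- A polynomial over `F_p` is completely reducible if it is a product of
(not necessarily distinct) linear factors `x - α` with `α ∈ F_p`. -/
def CompletelyReducible (p : ℕ) (f : Polynomial (ZMod p)) : Prop :=
  ∃ s : Multiset (ZMod p), f = (s.map fun a => Polynomial.X - Polynomial.C a).prod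

theorem divides_derivative_mod_mul (p : ℕ) [Fact p.Prime]
    (P R S : Polynomial (ZMod p))
    (hP : P = R * S) (hR : CompletelyReducible p R) :
    P ∣ Polynomial.derivative P
        * (P %ₘ (Polynomial.X ^ p - Polynomial.X)) * S := by
  classical
  obtain ⟨s, hs⟩ := hR
  set Q : Polynomial (ZMod p) := P %ₘ (X ^ p - X) with hQ
  by_cases hT : derivative P * Q = 0
  · rw [hT, zero_mul]; exact dvd_zero _
  have hd0 : derivative P ≠ 0 := left_ne_zero_of_mul hT
  have hQ0 : Q ≠ 0 := right_ne_zero_of_mul hT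
  have hP0 : P ≠ 0 := fun h => hd0 (by simp [h])
  -- key: Q(a) = P(a) for all a
  have hQeval : ∀ a : ZMod p, Q.eval a = P.eval a := by
    intro a
    have hmonic : (X ^ p - X : Polynomial (ZMod p)).Monic := by
      have h1p : 1 < p := (Fact.out : p.Prime).one_lt
      exact monic_X_pow_sub (by rw [degree_X]; exact_mod_cast h1p)
    have := modByMonic_add_div P (X ^ p - X)
    have := congrArg (Polynomial.eval a) this
    simp only [eval_add, eval_mul, eval_sub, eval_pow, eval_X, ZMod.pow_card,
      sub_self, zero_mul, add_zero] at this
    exact this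
  suffices h : R ∣ derivative P * Q by
    calc P = R * S := hP
      _ ∣ derivative P * Q * S := mul_dvd_mul h dvd_rfl
  rw [hs, Multiset.prod_X_sub_C_dvd_iff_le_roots hT, roots_mul hT, Multiset.le_iff_count]
  intro a
  rcases Nat.eq_zero_or_pos (s.count a) with h0 | hpos
  · simp [h0]
  have haR : (X - C a) ∣ R := by
    rw [hs]
    exact Multiset.dvd_prod (Multiset.mem_map_of_mem _ (Multiset.count_pos.mp hpos))
  have haP : P.eval a = 0 := by
    have : (X - C a) ∣ P := hP ▸ haR.mul_right S
    exact (dvd_iff_isRoot).mp this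
  have hsP : s.count a ≤ P.rootMultiplicity a := by
    rw [le_rootMultiplicity_iff hP0]
    have : (X - C a) ^ s.count a ∣ R := by
      rw [hs]
      have : Multiset.replicate (s.count a) (X - C a) ≤ s.map fun b => X - C b := by
        rw [← Multiset.le_count_iff_replicate_le, Multiset.count_map]
        exact le_trans (by simp [Multiset.count_eq_card_filter_eq]
          ) le_rfl
      calc (X - C a) ^ s.count a = (Multiset.replicate (s.count a) (X - C a)).prod := by
            rw [Multiset.prod_replicate]
        _ ∣ _ := Multiset.prod_dvd_prod_of_le this
    exact hP ▸ this.mul_right S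
  have h1 : P.rootMultiplicity a - 1 ≤ (derivative P).rootMultiplicity a :=
    rootMultiplicity_sub_one_le_derivative_rootMultiplicity_of_ne_zero _ _ hd0
  have h2 : 1 ≤ Q.rootMultiplicity a := by
    rw [Nat.one_le_iff_ne_zero, ← Nat.pos_iff_ne_zero]
    exact (rootMultiplicity_pos hQ0).mpr (by rw [IsRoot, hQeval]; exact haP)
  have h3 : 1 ≤ P.rootMultiplicity a :=
    (rootMultiplicity_pos hP0).mpr haP
  simp only [Multiset.count_add, count_roots]
  omega
end

section
/- Let p be a prime and g ∈ F_p[x] with deg g < p/2. If the polynomial x^p + g(x) is completely reducible over F_p, then either g is a constant polynomial or g(x) = -x. -/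
open Polynomial in
theorem redei_lacunary (p : ℕ) [Fact p.Prime] (g : Polynomial (ZMod p))
    (hdeg : 2 * g.natDegree < p)
    (hred : CompletelyReducible p (Polynomial.X ^ p + g)) :
    (∃ c : ZMod p, g = Polynomial.C c) ∨ g = -Polynomial.X := by
  classical
  by_cases hd0 : g.natDegree = 0
  · exact Or.inl ((Polynomial.natDegree_eq_zero.mp hd0).imp fun c hc => hc.symm)
  by_cases hgx : g = -X
  · exact Or.inr hgx
  exfalso
  obtain ⟨s, hs⟩ := hred
  have hp := (Fact.out : p.Prime)
  have hd1 : 1 ≤ g.natDegree := Nat.one_le_iff_ne_zero.2 hd0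
  have hdp : g.natDegree < p := lt_of_le_of_lt (by omega) hdeg
  set f : Polynomial (ZMod p) := X ^ p + g with hf
  have hfdeg : f.natDegree = p := by
    rw [hf, natDegree_add_eq_left_of_natDegree_lt (by simpa using hdp), natDegree_X_pow]
  have hcard : Multiset.card s = p := by
    have h := natDegree_multiset_prod_X_sub_C_eq_card s
    rw [← hs, hfdeg] at h
    exact h.symm
  have hroots : f.roots = s := by rw [hs]; exact roots_multiset_prod_X_sub_C s
  have hderiv : derivative f = derivative g := by
    rw [hf, derivative_add, derivative_X_pow]
    simp
  -- derivative of g is nonzero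
  have hgne : g ≠ 0 := fun h => hd0 (by simp [h])
  have hg' : derivative g ≠ 0 := by
    intro h
    have hc : (derivative g).coeff (g.natDegree - 1) = 0 := by rw [h]; simp
    rw [coeff_derivative] at hc
    have hnd : g.natDegree - 1 + 1 = g.natDegree := by omega
    rw [hnd] at hc
    have h1 : g.coeff g.natDegree ≠ 0 := by
      rw [← leadingCoeff]; exact leadingCoeff_ne_zero.2 hgne
    have h2 : ((g.natDegree - 1 : ℕ) + 1 : ZMod p) ≠ 0 := by
      have h3 : (((g.natDegree - 1) + 1 : ℕ) : ZMod p) ≠ 0 := by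
        intro h0
        rw [ZMod.natCast_eq_zero_iff] at h0
        have hdvd := h0
        have := Nat.le_of_dvd (by omega) hdvd
        omega
      push_cast at h3
      exact h3
    exact (mul_ne_zero h1 h2) hc
  set t := s.toFinset with ht
  have htle : t.val ≤ s := by
    rw [ht, Multiset.toFinset_val]
    exact s.dedup_le
  have hhf : (t.val.map fun a => X - C a).prod ∣ f :=
    hs ▸ Multiset.prod_dvd_prod_of_le (Multiset.map_le_map htle)
  have hhX : (t.val.map fun a => X - C a).prod ∣ X ^ p - X := by
    have heq : (t.val.map fun a => X - C a).prod = ∏ a ∈ t, (X - C a) := rfl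
    rw [heq]
    apply Finset.prod_dvd_of_coprime
    · exact (pairwise_coprime_X_sub_C (Function.injective_id (α := ZMod p))).set_pairwise _
    · intro a _
      rw [dvd_iff_isRoot]
      simp [IsRoot, ZMod.pow_card]
  have hgx0 : g + X ≠ 0 := fun h => hgx (by linear_combination h)
  have hhgx : (t.val.map fun a => X - C a).prod ∣ g + X := by
    have heq : f - (X ^ p - X) = g + X := by rw [hf]; ring
    exact heq ▸ dvd_sub hhf hhX
  have hk : t.card ≤ g.natDegree := by
    have h1 := natDegree_le_of_dvd hhgx hgx0
    rw [natDegree_multiset_prod_X_sub_C_eq_card] at h1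
    have h2 : (g + X).natDegree ≤ g.natDegree := by
      refine (natDegree_add_le _ _).trans ?_
      simpa using hd1
    calc t.card = Multiset.card t.val := rfl
      _ ≤ g.natDegree := le_trans h1 h2
  have key : ∀ a ∈ t, s.count a - 1 ≤ (derivative g).roots.count a := by
    intro a _
    have h1 : f.rootMultiplicity a = s.count a := by rw [← count_roots, hroots]
    have h2 := rootMultiplicity_sub_one_le_derivative_rootMultiplicity_of_ne_zero f a
      (by rw [hderiv]; exact hg')
    rw [count_roots, ← hderiv]
    omega
  have hsum : ∑ a ∈ t, (derivative g).roots.count a ≤ Multiset.card (derivative g).roots := by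
    set m := (derivative g).roots with hm
    calc ∑ a ∈ t, m.count a ≤ ∑ a ∈ t ∪ m.toFinset, m.count a :=
          Finset.sum_le_sum_of_subset Finset.subset_union_left
      _ = ∑ a ∈ m.toFinset, m.count a := by
          refine (Finset.sum_subset Finset.subset_union_right ?_).symm
          intro a _ ha
          exact Multiset.count_eq_zero_of_notMem (fun h => ha (Multiset.mem_toFinset.2 h))
      _ = Multiset.card m := m.toFinset_sum_count_eq
  have hroots' : Multiset.card (derivative g).roots ≤ g.natDegree - 1 := by
    have h1 := card_roots' (derivative g)
    have h2 := natDegree_derivative_le g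
    omega
  have hcnt : ∑ a ∈ t, s.count a = p := by
    rw [ht, Multiset.toFinset_sum_count_eq, hcard]
  have hsplit : ∑ a ∈ t, (s.count a - 1) + t.card = p := by
    have heq : ∑ a ∈ t, (s.count a - 1) + t.card = ∑ a ∈ t, s.count a := by
      rw [Finset.card_eq_sum_ones, ← Finset.sum_add_distrib]
      refine Finset.sum_congr rfl fun a ha => ?_
      have : 1 ≤ s.count a := Multiset.one_le_count_iff_mem.2 (Multiset.mem_toFinset.1 ha)
      omega
    rw [heq, hcnt]
  have h5 : ∑ a ∈ t, (s.count a - 1) ≤ g.natDegree - 1 :=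
    le_trans (Finset.sum_le_sum key) (le_trans hsum hroots')
  omega
end

section
/- Let p be a prime, n ≥ 1, and A, B ∈ ℕ. Let H(x) = x^{np} + g_1(x)·x^{(n-1)p} + ⋯ + g_{n-1}(x)·x^p + g_n(x) ∈ F_p[x], where deg g_1 ≤ A + 1 and deg g_k ≤ B + k for all 1 ≤ k ≤ n. Suppose H = R·S with R ∈ F_p[x] completely reducible and A + B + n + deg S < p. Then H is a product of n factors, each of the form x^p - x or x^p - α for some α ∈ F_p. -/
open Polynomial Finset

variable {p : ℕ} [Fact p.Prime]

private lemma X_sub_C_dvd_XpX (a : ZMod p) : (X - C a) ∣ (X ^ p - X : (ZMod p)[X]) := by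
  rw [dvd_iff_isRoot]
  simp [IsRoot, ZMod.pow_card]

private lemma monic_XpX : (X ^ p - X : (ZMod p)[X]).Monic := by
  apply (monic_X_pow p).sub_of_left
  rw [degree_X_pow, degree_X]
  exact_mod_cast (Fact.out : p.Prime).one_lt

private lemma natDegree_XpX : (X ^ p - X : (ZMod p)[X]).natDegree = p := by
  have h1 : (X : (ZMod p)[X]).degree < (X ^ p : (ZMod p)[X]).degree := by
    rw [degree_X_pow, degree_X]
    exact_mod_cast (Fact.out : p.Prime).one_lt
  rw [sub_eq_add_neg, natDegree_add_eq_left_of_degree_lt (by rwa [degree_neg]), natDegree_X_pow]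

private lemma fr_dvd_deriv (s : Multiset (ZMod p)) :
    (s.map fun a => X - C a).prod ∣ (X ^ p - X) * derivative (s.map fun a => X - C a).prod := by
  induction s using Multiset.induction with
  | empty => simp
  | cons a s ih =>
    rw [Multiset.map_cons, Multiset.prod_cons, derivative_mul, derivative_sub, derivative_X,
      derivative_C, sub_zero, one_mul, mul_add]
    apply dvd_add
    · exact mul_dvd_mul (X_sub_C_dvd_XpX a) dvd_rfl
    · rw [mul_left_comm]
      exact mul_dvd_mul_left _ ih

private lemma prod_univ_XpX :
    ∏ a : ZMod p, (X - C a) = (X ^ p - X : (ZMod p)[X]) := by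
  have h := FiniteField.roots_X_pow_card_sub_X (ZMod p)
  rw [ZMod.card] at h
  have := prod_multiset_X_sub_C_of_monic_of_roots_card_eq (monic_XpX (p := p))
    (by rw [h, natDegree_XpX]; simp)
  rw [h] at this
  rw [← this, Finset.prod_eq_multiset_prod]
variable {p : ℕ} [Fact p.Prime]

private noncomputable def Gg (g : ℕ → (ZMod p)[X]) (k : ℕ) : (ZMod p)[X] :=
  X ^ k + ∑ i ∈ Icc 1 k, g i * X ^ (k - i)

private lemma Gg_zero (g : ℕ → (ZMod p)[X]) : Gg g 0 = 1 := by simp [Gg]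

private lemma Gg_succ (g : ℕ → (ZMod p)[X]) (k : ℕ) :
    Gg g (k + 1) = X * Gg g k + g (k + 1) := by
  unfold Gg
  rw [Finset.sum_Icc_succ_top (by omega : 1 ≤ k + 1), mul_add, Finset.mul_sum]
  have h1 : ∀ i ∈ Icc 1 k, X * (g i * X ^ (k - i)) = g i * X ^ (k + 1 - i) := by
    intro i hi
    rw [mem_Icc] at hi
    rw [mul_left_comm, ← pow_succ']
    congr 2
    omega
  rw [Finset.sum_congr rfl h1, Nat.sub_self, pow_zero, mul_one, pow_succ]
  ring

private lemma key_id (g : ℕ → (ZMod p)[X]) (m : ℕ) :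
    (X ^ p - X) * (∑ k ∈ range (m + 1), Gg g k * X ^ ((m - k) * p)) =
      (X ^ ((m + 1) * p) + ∑ k ∈ Icc 1 (m + 1), g k * X ^ ((m + 1 - k) * p))
        - Gg g (m + 1) := by
  have hA : (X ^ p : (ZMod p)[X]) * (∑ k ∈ range (m + 1), Gg g k * X ^ ((m - k) * p)) =
      ∑ k ∈ range (m + 1), Gg g k * X ^ ((m + 1 - k) * p) := by
    rw [Finset.mul_sum]
    refine Finset.sum_congr rfl fun k hk => ?_
    rw [mem_range] at hk
    rw [mul_left_comm, ← pow_add]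
    congr 2
    rw [show m + 1 - k = (m - k) + 1 by omega, Nat.succ_mul, add_comm]
  have hA2 : ∑ k ∈ range (m + 2), Gg g k * X ^ ((m + 1 - k) * p) =
      (∑ k ∈ range (m + 1), Gg g k * X ^ ((m + 1 - k) * p)) + Gg g (m + 1) := by
    rw [Finset.sum_range_succ, Nat.sub_self, zero_mul, pow_zero, mul_one]
  have hA3 : ∑ k ∈ range (m + 2), Gg g k * X ^ ((m + 1 - k) * p) =
      X ^ ((m + 1) * p) + ∑ k ∈ range (m + 1), Gg g (k + 1) * X ^ ((m - k) * p) := by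
    rw [Finset.sum_range_succ']
    have : ∀ k ∈ range (m + 1),
        Gg g (k + 1) * X ^ ((m + 1 - (k + 1)) * p) = Gg g (k + 1) * X ^ ((m - k) * p) := by
      intro k hk; congr 3; omega
    rw [Finset.sum_congr rfl this, Gg_zero, one_mul, Nat.sub_zero, add_comm]
  have hB : ∑ k ∈ Icc 1 (m + 1), g k * X ^ ((m + 1 - k) * p) =
      ∑ k ∈ range (m + 1), g (k + 1) * X ^ ((m - k) * p) := by
    rw [show Icc 1 (m + 1) = Ico 1 (m + 2) from (Finset.Ico_add_one_right_eq_Icc 1 (m + 1)).symm, Finset.sum_Ico_eq_sum_range]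
    refine Finset.sum_congr (by congr 1) fun k hk => ?_
    congr 2
    · omega
    · congr 1; omega
  rw [sub_mul, hA]
  have := hA2.symm.trans hA3
  -- (∑ range (m+1)) = X^((m+1)*p) + ∑ Gg (k+1) .. - Gg (m+1)
  rw [eq_sub_of_add_eq this.symm] -- maybe wrong direction; adjust
  rw [hB, Finset.mul_sum]
  have hstep : ∀ k ∈ range (m + 1),
      (X : (ZMod p)[X]) * (Gg g k * X ^ ((m - k) * p)) = Gg g (k + 1) * X ^ ((m - k) * p) - g (k + 1) * X ^ ((m - k) * p) := by
    intro k hk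
    rw [Gg_succ]; ring
  rw [Finset.sum_congr rfl hstep, Finset.sum_sub_distrib]
  ring

private theorem aux (p A B : ℕ) [Fact p.Prime] : ∀ n : ℕ, 1 ≤ n →
    ∀ (g : ℕ → Polynomial (ZMod p)) (H R S : Polynomial (ZMod p)),
      H = X ^ (n * p) + ∑ k ∈ Finset.Icc 1 n, g k * X ^ ((n - k) * p) →
      (g 1).natDegree ≤ A + 1 →
      (∀ k ∈ Finset.Icc 1 n, (g k).natDegree ≤ B + k) →
      H = R * S →
      CompletelyReducible p R →
      A + B + n + S.natDegree < p →
      ∃ f : Fin n → Polynomial (ZMod p),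
        (∀ i, f i = X ^ p - X ∨ ∃ α : ZMod p, f i = X ^ p - C α) ∧ H = ∏ i, f i := by
  intro n
  induction n with
  | zero => omega
  | succ m ih =>
    intro _ g H R S hH hg1 hgk hRS hR hdeg
    have hp2 : 2 ≤ p := (Fact.out : p.Prime).two_le
    have hmul : (m + 1) * p = m * p + p := by ring
    have hW : (∑ k ∈ Icc 1 (m + 1), g k * X ^ ((m + 1 - k) * p)).natDegree
        ≤ m * p + (B + m + 1) := by
      apply natDegree_sum_le_of_forall_le
      intro k hk
      rw [mem_Icc] at hk
      have h1 : (m + 1 - k) * p ≤ m * p := Nat.mul_le_mul_right p (by omega)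
      have h2 := hgk k (by rw [mem_Icc]; omega)
      calc (g k * X ^ ((m + 1 - k) * p)).natDegree
          ≤ (g k).natDegree + (X ^ ((m + 1 - k) * p) : (ZMod p)[X]).natDegree :=
            natDegree_mul_le
        _ ≤ (B + k) + (m + 1 - k) * p := by rw [natDegree_X_pow]; omega
        _ ≤ m * p + (B + m + 1) := by omega
    have hdegW : (∑ k ∈ Icc 1 (m + 1), g k * X ^ ((m + 1 - k) * p)).degree
        < (X ^ ((m + 1) * p) : (ZMod p)[X]).degree := by
      rw [degree_X_pow]
      refine lt_of_le_of_lt degree_le_natDegree ?_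
      exact_mod_cast lt_of_le_of_lt hW (by omega)
    have hHmonic : H.Monic := by
      rw [hH]; exact (monic_X_pow _).add_of_left hdegW
    have hHdeg : H.natDegree = (m + 1) * p := by
      rw [hH, natDegree_add_eq_left_of_degree_lt hdegW, natDegree_X_pow]
    have hHne : H ≠ 0 := hHmonic.ne_zero
    have hRne : R ≠ 0 := fun h => hHne (by rw [hRS, h, zero_mul])
    have hSne : S ≠ 0 := fun h => hHne (by rw [hRS, h, mul_zero])
    have hsum : R.natDegree + S.natDegree = (m + 1) * p := by
      rw [← natDegree_mul hRne hSne, ← hRS, hHdeg]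
    obtain ⟨s, hs⟩ := hR
    set Q : (ZMod p)[X] := ∑ k ∈ range (m + 1), Gg g k * X ^ ((m - k) * p) with hQdef
    have key : (X ^ p - X) * Q = H - Gg g (m + 1) := by
      rw [hQdef, key_id, ← hH]
    by_cases hcase : Gg g (m + 1) = 0
    · -- Case A : x^p - x divides H
      have hHQ : H = (X ^ p - X) * Q := by rw [key, hcase, sub_zero]
      rcases Nat.eq_zero_or_pos m with hm | hm
      · subst hm
        refine ⟨fun _ => X ^ p - X, fun i => Or.inl rfl, ?_⟩
        rw [Fin.prod_univ_one, hHQ]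
        have : Q = 1 := by simp [hQdef, Gg_zero]
        rw [this, mul_one]
      · -- m ≥ 1
        set D : (ZMod p)[X] := ∏ a ∈ s.toFinset, (X - C a) with hD
        set E : (ZMod p)[X] := ∏ a ∈ (Finset.univ \ s.toFinset), (X - C a) with hE
        have hED : E * D = X ^ p - X := by
          rw [hE, hD, Finset.prod_sdiff (Finset.subset_univ _), prod_univ_XpX]
        have hRfactor : R = ((s - s.dedup).map fun a => X - C a).prod * D := by
          rw [hs, hD, Finset.prod_eq_multiset_prod, Multiset.toFinset_val,
            ← Multiset.prod_add, ← Multiset.map_add]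
          rw [tsub_add_cancel_of_le (Multiset.dedup_le s)]
        have hLdvdRS : (X ^ p - X : (ZMod p)[X]) ∣ R * S := ⟨Q, by rw [← hRS, hHQ]⟩
        have hcop : IsCoprime E R := by
          rw [hE]
          apply IsCoprime.prod_left
          intro a ha
          rcases (irreducible_X_sub_C a).isCoprime_or_dvd R with h | h
          · exact h
          · exfalso
            rw [Polynomial.dvd_iff_isRoot] at h
            have hmem : a ∈ R.roots := by
              rw [mem_roots hRne]; exact h
            rw [hs, roots_multiset_prod_X_sub_C] at hmem
            rw [Finset.mem_sdiff] at ha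
            exact ha.2 (Multiset.mem_toFinset.mpr hmem)
        have hEdvdS : E ∣ S :=
          hcop.dvd_of_dvd_mul_left (dvd_trans ⟨D, hED.symm⟩ hLdvdRS)
        obtain ⟨S₁, hS₁⟩ := hEdvdS
        have hLne : (X ^ p - X : (ZMod p)[X]) ≠ 0 := monic_XpX.ne_zero
        have hQRS : Q = ((s - s.dedup).map fun a => X - C a).prod * S₁ := by
          apply mul_left_cancel₀ hLne
          rw [← hHQ, hRS, hRfactor, hS₁, ← hED]; ring
        have hQform : Q = X ^ (m * p) + ∑ k ∈ Icc 1 m, Gg g k * X ^ ((m - k) * p) := by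
          rw [hQdef, Finset.sum_range_succ', Gg_zero, one_mul, Nat.sub_zero,
            show Icc 1 m = Ico 1 (m + 1) by rw [Finset.Ico_add_one_right_eq_Icc],
            Finset.sum_Ico_eq_sum_range]
          rw [add_comm]
          congr 1
          refine Finset.sum_congr (by congr 1) fun i hi => ?_
          congr 2
          · omega
          · congr 1; omega
        have hg1' : (Gg g 1).natDegree ≤ A + 1 := by
          have : Gg g 1 = X + g 1 := by simp [Gg]
          rw [this]
          refine (natDegree_add_le _ _).trans ?_
          rw [natDegree_X]; simp; omega
        have hgk' : ∀ k ∈ Icc 1 m, (Gg g k).natDegree ≤ B + k := by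
          intro k hk
          rw [mem_Icc] at hk
          unfold Gg
          refine (natDegree_add_le _ _).trans (max_le ?_ ?_)
          · rw [natDegree_X_pow]; omega
          · apply natDegree_sum_le_of_forall_le
            intro i hi
            rw [mem_Icc] at hi
            have h2 := hgk i (by rw [mem_Icc]; omega)
            calc (g i * X ^ (k - i)).natDegree
                ≤ (g i).natDegree + (X ^ (k - i) : (ZMod p)[X]).natDegree := natDegree_mul_le
              _ ≤ (B + i) + (k - i) := by rw [natDegree_X_pow]; omega
              _ ≤ B + k := by omega
        have hEne : E ≠ 0 := by
          rw [hE]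
          exact (monic_prod_of_monic _ _ fun a _ => monic_X_sub_C a).ne_zero
        have hS₁ne : S₁ ≠ 0 := fun h => hSne (by rw [hS₁, h, mul_zero])
        have hdeg' : A + B + m + S₁.natDegree < p := by
          have : S.natDegree = E.natDegree + S₁.natDegree := by
            rw [hS₁, natDegree_mul hEne hS₁ne]
          omega
        obtain ⟨f', hf'1, hf'2⟩ := ih hm (Gg g) Q _ S₁ hQform hg1' hgk' hQRS ⟨_, rfl⟩ hdeg'
        refine ⟨Fin.cons (X ^ p - X) f', ?_, ?_⟩
        · intro i
          refine Fin.cases ?_ ?_ i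
          · exact Or.inl (by simp)
          · intro j; rw [Fin.cons_succ]; exact hf'1 j
        · rw [Fin.prod_univ_succ, Fin.cons_zero, hHQ, hf'2]
          simp [Fin.cons_succ]
    · -- Case B
      have hLne : (X ^ p - X : (ZMod p)[X]) ≠ 0 := monic_XpX.ne_zero
      have hLdvd_Hh : (X ^ p - X : (ZMod p)[X]) ∣ H - Gg g (m + 1) := ⟨Q, key.symm⟩
      have hGdeg : (Gg g (m + 1)).natDegree ≤ B + (m + 1) := by
        unfold Gg
        refine (natDegree_add_le _ _).trans (max_le ?_ ?_)
        · rw [natDegree_X_pow]; omega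
        · apply natDegree_sum_le_of_forall_le
          intro i hi
          rw [mem_Icc] at hi
          have h2 := hgk i (by rw [mem_Icc]; omega)
          calc (g i * X ^ (m + 1 - i)).natDegree
              ≤ (g i).natDegree + (X ^ (m + 1 - i) : (ZMod p)[X]).natDegree := natDegree_mul_le
            _ ≤ (B + i) + (m + 1 - i) := by rw [natDegree_X_pow]; omega
            _ ≤ B + (m + 1) := by omega
      have hH' : derivative H = ∑ k ∈ Icc 1 (m + 1), derivative (g k) * X ^ ((m + 1 - k) * p) := by
        rw [hH, derivative_add, derivative_sum, derivative_X_pow, Nat.cast_mul,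
          ZMod.natCast_self, mul_zero, map_zero, zero_mul, zero_add]
        refine Finset.sum_congr rfl fun k hk => ?_
        rw [derivative_mul, derivative_X_pow, Nat.cast_mul, ZMod.natCast_self, mul_zero,
          map_zero, zero_mul, mul_zero, add_zero]
      have hH'deg : (derivative H).natDegree ≤ m * p + A := by
        rw [hH']
        apply natDegree_sum_le_of_forall_le
        intro k hk
        rw [mem_Icc] at hk
        have hbase : (derivative (g k) * X ^ ((m + 1 - k) * p)).natDegree
            ≤ (derivative (g k)).natDegree + (m + 1 - k) * p := by
          refine natDegree_mul_le.trans ?_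
          rw [natDegree_X_pow]
        rcases Nat.eq_or_lt_of_le hk.1 with hk1 | hk2
        · -- k = 1
          have hd : (derivative (g k)).natDegree ≤ A := by
            refine (natDegree_derivative_le _).trans ?_
            rw [← hk1]; omega
          have : (m + 1 - k) * p = m * p := by rw [← hk1]; norm_num
          omega
        · -- 2 ≤ k
          have hd : (derivative (g k)).natDegree ≤ B + k - 1 := by
            refine (natDegree_derivative_le _).trans ?_
            have := hgk k (by rw [mem_Icc]; omega)
            omega
          have hkp : (m + 1 - k) * p ≤ (m - 1) * p := Nat.mul_le_mul_right p (by omega)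
          have hmp : (m - 1) * p + p = m * p := by
            rw [← Nat.succ_mul]; congr 1; omega
          omega
      have hRdvdR' : R ∣ (X ^ p - X) * derivative R := by rw [hs]; exact fr_dvd_deriv s
      have hRdvd : R ∣ (X ^ p - X) * derivative H := by
        obtain ⟨c, hc⟩ := hRdvdR'
        refine ⟨c * S + (X ^ p - X) * derivative S, ?_⟩
        rw [hRS, derivative_mul, mul_add, ← mul_assoc, hc]
        ring
      obtain ⟨T, hT⟩ := hRdvd
      have hLdvdTh : (X ^ p - X : (ZMod p)[X]) ∣ T * Gg g (m + 1) := by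
        have h2 : (X ^ p - X : (ZMod p)[X]) ∣ T * H := by
          refine ⟨derivative H * S, ?_⟩
          conv_lhs => rw [hRS]
          calc T * (R * S) = (R * T) * S := by ring
            _ = ((X ^ p - X) * derivative H) * S := by rw [hT]
            _ = _ := by ring
        have h3 : (X ^ p - X : (ZMod p)[X]) ∣ T * (H - Gg g (m + 1)) := hLdvd_Hh.mul_left T
        have h4 : T * Gg g (m + 1) = T * H - T * (H - Gg g (m + 1)) := by ring
        rw [h4]; exact dvd_sub h2 h3
      have hT0 : T = 0 := by
        by_contra hT0
        have hH'ne : derivative H ≠ 0 := by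
          intro h0
          rw [h0, mul_zero] at hT
          rcases mul_eq_zero.mp hT.symm with h | h
          · exact absurd h hRne
          · exact hT0 h
        have e1 : p + (derivative H).natDegree = R.natDegree + T.natDegree := by
          calc p + (derivative H).natDegree = ((X ^ p - X) * derivative H).natDegree := by
                rw [natDegree_mul hLne hH'ne, natDegree_XpX]
            _ = (R * T).natDegree := by rw [hT]
            _ = R.natDegree + T.natDegree := natDegree_mul hRne hT0
        have hTGne : T * Gg g (m + 1) ≠ 0 := mul_ne_zero hT0 hcase
        have hple : p ≤ (T * Gg g (m + 1)).natDegree := by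
          have := natDegree_le_of_dvd hLdvdTh hTGne
          rwa [natDegree_XpX] at this
        rw [natDegree_mul hT0 hcase] at hple
        omega
      have hH'0 : derivative H = 0 := by
        rw [hT0, mul_zero] at hT
        exact (mul_eq_zero.mp hT).resolve_left hLne
      haveI : ExpChar (ZMod p) p := .prime Fact.out
      have hwp : (Polynomial.contract p H) ^ p = H := by
        have h1 := Polynomial.expand_contract p hH'0 (by omega : p ≠ 0)
        have h2 := Polynomial.map_frobenius_expand p (Polynomial.contract p H)
        rw [ZMod.frobenius_zmod, Polynomial.map_id] at h2
        rw [← h2, h1]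
      set w : (ZMod p)[X] := Polynomial.contract p H with hwdef
      have hwdeg : w.natDegree = m + 1 := by
        have h1 : H.natDegree = p * w.natDegree := by rw [← hwp, natDegree_pow]
        rw [hHdeg] at h1
        have hp0 : 0 < p := by omega
        apply Nat.eq_of_mul_eq_mul_left hp0
        rw [← h1, Nat.mul_comm]
      have hwmonic : w.Monic := by
        have h1 : w.leadingCoeff ^ p = 1 := by rw [← leadingCoeff_pow, hwp]; exact hHmonic
        unfold Monic
        calc w.leadingCoeff = w.leadingCoeff ^ p := (ZMod.pow_card _).symm
          _ = 1 := h1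
      have hrootsH : Multiset.card H.roots = p * Multiset.card w.roots := by
        rw [← hwp, roots_pow, Multiset.card_nsmul]
      have hcardR : Multiset.card R.roots = R.natDegree := by
        rw [hs, roots_multiset_prod_X_sub_C, natDegree_multiset_prod_X_sub_C_eq_card]
      have hRrootsle : R.natDegree ≤ Multiset.card H.roots := by
        have : H.roots = R.roots + S.roots := by
          rw [hRS, roots_mul (by rw [← hRS]; exact hHne)]
        rw [this, Multiset.card_add]
        omega
      have hwcard : Multiset.card w.roots = m + 1 := by
        have hle := card_roots' w
        rw [hwdeg] at hle
        by_contra hne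
        have h2 : Multiset.card w.roots ≤ m := by omega
        have h3 : p * Multiset.card w.roots ≤ p * m := Nat.mul_le_mul_left p h2
        have h4 : p * m = m * p := Nat.mul_comm p m
        omega
      have hwfact : (w.roots.map fun a => X - C a).prod = w :=
        prod_multiset_X_sub_C_of_monic_of_roots_card_eq hwmonic (by rw [hwcard, hwdeg])
      have hHfact : H = (w.roots.map fun a => X ^ p - C a).prod := by
        rw [← hwp]
        conv_lhs => rw [← hwfact]
        rw [← Multiset.prod_map_pow]
        congr 1
        apply Multiset.map_congr rfl
        intro a ha
        rw [sub_pow_char, ← C_pow, ZMod.pow_card]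
      set l := w.roots.toList with hl
      have hlen : l.length = m + 1 := by rw [hl, Multiset.length_toList, hwcard]
      refine ⟨fun i => X ^ p - C (l.get (Fin.cast hlen.symm i)), fun i => Or.inr ⟨_, rfl⟩, ?_⟩
      rw [hHfact]
      have hcoel : w.roots = ↑l := (Multiset.coe_toList _).symm
      rw [hcoel, Multiset.map_coe, Multiset.prod_coe]
      have hofn : l.map (fun a => (X : (ZMod p)[X]) ^ p - C a)
          = List.ofFn (fun i : Fin l.length => X ^ p - C (l.get i)) := by
        conv_lhs => rw [← List.ofFn_get l]
        rw [List.map_ofFn]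
        rfl
      rw [hofn, List.prod_ofFn]
      exact Fintype.prod_equiv (finCongr hlen) _ _ fun i => rfl

theorem lacunary_high_degree (p n A B : ℕ) [Fact p.Prime] (hn : 1 ≤ n)
    (g : ℕ → Polynomial (ZMod p)) (H R S : Polynomial (ZMod p))
    (hH : H = Polynomial.X ^ (n * p)
        + ∑ k ∈ Finset.Icc 1 n, g k * Polynomial.X ^ ((n - k) * p))
    (hg1 : (g 1).natDegree ≤ A + 1)
    (hgk : ∀ k ∈ Finset.Icc 1 n, (g k).natDegree ≤ B + k)
    (hRS : H = R * S) (hR : CompletelyReducible p R)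
    (hdeg : A + B + n + S.natDegree < p) :
    ∃ f : Fin n → Polynomial (ZMod p),
      (∀ i, f i = Polynomial.X ^ p - Polynomial.X
        ∨ ∃ α : ZMod p, f i = Polynomial.X ^ p - Polynomial.C α) ∧
      H = ∏ i, f i :=
  aux p A B n hn g H R S hH hg1 hgk hRS hR hdeg
end

section
/- Let p be a prime and U ⊆ F_p^2 with #U = n·p - r, where 1 ≤ n ≤ p and 0 ≤ r < p. Suppose m_0 ∈ F_p ∪ {∞} is a direction such that every U-special direction equals m_0. Then every line with slope m_0 is either entirely contained in U or meets U in at most p - r points. -/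
open Finset Polynomial

attribute [local instance] Classical.propDecidable

theorem line_with_unique_special_slope (p n r : ℕ) [Fact p.Prime]
    (U : Finset (ZMod p × ZMod p))
    (hn : 1 ≤ n) (hnp : n ≤ p) (hr : r < p)
    (hcard : (U.card : ℤ) = n * p - r)
    (m0 : Option (ZMod p))
    (hm0 : ∀ m : Option (ZMod p), IsSpecialDir p U m → m = m0) :
    ∀ c : ZMod p, lineWithSlope p m0 c ⊆ U
      ∨ ((lineWithSlope p m0 c ∩ U).card : ℤ) ≤ (p : ℤ) - r := by
  intro c
  by_cases hsub : lineWithSlope p m0 c ⊆ U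
  · exact Or.inl hsub
  right
  obtain ⟨Q, hQl, hQU⟩ := Finset.not_subset.mp hsub
  set L : Option (ZMod p) → Finset (ZMod p × ZMod p) := fun m =>
    lineWithSlope p m (m.elim Q.1 fun m' => Q.2 - m' * Q.1) with hLdef
  -- two distinct lines through Q meet only at Q
  have huniq : ∀ m m' : Option (ZMod p), m ≠ m' →
      ∀ P : ZMod p × ZMod p, P ∈ L m → P ∈ L m' → P = Q := by
    intro m m' hne P hP hP'
    match m, m' with
    | none, none => exact absurd rfl hne
    | none, some a =>
        simp only [hLdef, Option.elim] at hP hP'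
        simp only [lineWithSlope, mem_filter, mem_univ, true_and] at hP hP'
        refine Prod.ext hP ?_
        rw [hP', hP]; ring
    | some a, none =>
        simp only [hLdef, Option.elim] at hP hP'
        simp only [lineWithSlope, mem_filter, mem_univ, true_and] at hP hP'
        refine Prod.ext hP' ?_
        rw [hP, hP']; ring
    | some a, some b =>
        have hab : a ≠ b := fun h => hne (by rw [h])
        simp only [hLdef, Option.elim] at hP hP'
        simp only [lineWithSlope, mem_filter, mem_univ, true_and] at hP hP'
        have h1 : (a - b) * (P.1 - Q.1) = 0 := by linear_combination hP' - hP
        rcases mul_eq_zero.mp h1 with h | h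
        · exact absurd (sub_eq_zero.mp h) hab
        · have h2 : P.1 = Q.1 := sub_eq_zero.mp h
          refine Prod.ext h2 ?_
          rw [hP, h2]; ring
  -- every point lies on some line through Q
  have hcov : ∀ P : ZMod p × ZMod p, ∃ m, P ∈ L m := by
    intro P
    by_cases h1 : P.1 = Q.1
    · exact ⟨none, by simp only [hLdef, Option.elim]; simp [lineWithSlope, h1]⟩
    · refine ⟨some ((P.2 - Q.2) / (P.1 - Q.1)), ?_⟩
      simp only [hLdef, Option.elim]
      simp only [lineWithSlope, mem_filter, mem_univ, true_and]
      have h2 : P.1 - Q.1 ≠ 0 := sub_ne_zero.mpr h1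
      field_simp
      ring
  have hU : U = Finset.univ.biUnion fun m => L m ∩ U := by
    ext P
    simp only [mem_biUnion, mem_univ, true_and, mem_inter]
    constructor
    · intro h; obtain ⟨m, hm⟩ := hcov P; exact ⟨m, hm, h⟩
    · rintro ⟨m, _, h⟩; exact h
  have hsum : U.card = ∑ m : Option (ZMod p), (L m ∩ U).card := by
    conv_lhs => rw [hU]
    refine Finset.card_biUnion ?_
    intro x _ y _ hxy
    rw [Function.onFun, Finset.disjoint_left]
    intro P hPx hPy
    have := huniq x y hxy P (mem_inter.mp hPx).1 (mem_inter.mp hPy).1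
    exact hQU (this ▸ (mem_inter.mp hPx).2)
  -- the original line equals the line through Q with slope m0
  have hline : lineWithSlope p m0 c = L m0 := by
    cases m0 with
    | none =>
        simp only [lineWithSlope, mem_filter, mem_univ, true_and] at hQl
        simp only [hLdef, Option.elim]; simp [lineWithSlope, hQl]
    | some a =>
        simp only [lineWithSlope, mem_filter, mem_univ, true_and] at hQl
        have hc : Q.2 - a * Q.1 = c := by rw [hQl]; ring
        simp only [hLdef, Option.elim]; simp [lineWithSlope, hc]
  have hp0 : 0 < p := (Fact.out : p.Prime).pos
  have hp0q : (0 : ℚ) < p := by exact_mod_cast hp0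
  -- lower bound on lines with non-special slopes
  have hlow : ∀ m : Option (ZMod p), m ≠ m0 → (n : ℤ) - 1 ≤ ((L m ∩ U).card : ℤ) := by
    intro m hm
    have hns : ¬ IsSpecialDir p U m := fun h => hm (hm0 m h)
    have hnpoor : ¬ IsPoor p U (L m) := fun h => hns ⟨_, Or.inr h⟩
    unfold IsPoor at hnpoor
    push_neg at hnpoor
    by_contra hlt
    push_neg at hlt
    have hk : ((L m ∩ U).card : ℚ) ≤ (n : ℚ) - 2 := by
      have h : ((L m ∩ U).card : ℤ) ≤ (n : ℤ) - 2 := by omega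
      exact_mod_cast h
    have hUq : (U.card : ℚ) = n * p - r := by exact_mod_cast hcard
    have hrq : (r : ℚ) ≤ (p : ℚ) - 1 := by
      have : (r : ℤ) ≤ (p : ℤ) - 1 := by omega
      exact_mod_cast this
    have h2 : (U.card : ℚ) / p < ((L m ∩ U).card : ℚ) + 1 := by linarith
    have h3 : (U.card : ℚ) < (((L m ∩ U).card : ℚ) + 1) * p := (div_lt_iff₀ hp0q).mp h2
    have h4 : (((L m ∩ U).card : ℚ) + 1) * p ≤ ((n : ℚ) - 1) * p := by
      apply mul_le_mul_of_nonneg_right _ hp0q.le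
      linarith
    nlinarith
  -- put it all together
  have hsplit : (∑ m ∈ (Finset.univ.erase m0), ((L m ∩ U).card : ℤ))
      + ((L m0 ∩ U).card : ℤ) = (U.card : ℤ) := by
    rw [hsum]
    push_cast
    exact Finset.sum_erase_add _ _ (mem_univ m0)
  have hcarderase : (Finset.univ.erase m0).card = p := by
    rw [Finset.card_erase_of_mem (mem_univ m0), Finset.card_univ, Fintype.card_option,
      ZMod.card]
    omega
  have hsumlow : (p : ℤ) * ((n : ℤ) - 1) ≤
      ∑ m ∈ (Finset.univ.erase m0), ((L m ∩ U).card : ℤ) := by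
    calc (p : ℤ) * ((n : ℤ) - 1) = (Finset.univ.erase m0).card • ((n : ℤ) - 1) := by
          rw [hcarderase]; simp [nsmul_eq_mul]
      _ ≤ _ := Finset.card_nsmul_le_sum _ _ _ (fun m hm =>
          hlow m (Finset.ne_of_mem_erase hm))
  have hpn : (p : ℤ) * ((n : ℤ) - 1) = (p : ℤ) * n - p := by ring
  rw [hline]
  have hnp' : (n : ℤ) * p = (p : ℤ) * n := by ring
  linarith [hsplit, hsumlow, hcard]
end

section
/- Let p be a prime and U ⊆ F_p^2 with #U = n·p - r, where 1 ≤ n < p, 0 ≤ r < p, and p - r ≤ n. If U is not contained in the union of n lines of F_p^2, then there exist at least two distinct U-special directions. -/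
open Finset Polynomial

attribute [local instance] Classical.propDecidable

/-- The "intercept" of the line with slope `m` passing through `q`. -/
noncomputable def icpt {p : ℕ} (m : Option (ZMod p)) (q : ZMod p × ZMod p) : ZMod p :=
  match m with
  | some m => q.2 - m * q.1
  | none => q.1

/-- Number of points of `U` on the line with slope `m` and intercept `c`. -/
noncomputable def lineCount (p : ℕ) [NeZero p] (U : Finset (ZMod p × ZMod p))
    (m : Option (ZMod p)) (c : ZMod p) : ℕ :=
  ((lineWithSlope p m c) ∩ U).card

lemma mem_line_iff {p : ℕ} [NeZero p] (m : Option (ZMod p)) (c : ZMod p)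
    (q : ZMod p × ZMod p) : q ∈ lineWithSlope p m c ↔ icpt m q = c := by
  cases m with
  | none => simp [lineWithSlope, icpt]
  | some m => simp [lineWithSlope, icpt, sub_eq_iff_eq_add']

lemma line_card {p : ℕ} [NeZero p] (m : Option (ZMod p)) (c : ZMod p) :
    (lineWithSlope p m c).card = p := by
  cases m with
  | none =>
    rw [show (lineWithSlope p none c) = Finset.univ.image (fun v : ZMod p => (c, v)) by
      ext q; simp [lineWithSlope]; constructor
      · intro h; exact ⟨q.2, by rw [← h]⟩
      · rintro ⟨v, rfl⟩; rfl]
    rw [Finset.card_image_of_injective _ (fun a b h => by simpa using h)]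
    simp [ZMod.card]
  | some m =>
    rw [show (lineWithSlope p (some m) c) = Finset.univ.image (fun u : ZMod p => (u, m*u + c)) by
      ext q; simp [lineWithSlope]; constructor
      · intro h; exact ⟨q.1, by rw [← h]⟩
      · rintro ⟨v, rfl⟩; rfl]
    rw [Finset.card_image_of_injective _ (fun a b h => by simpa using (congrArg Prod.fst h))]
    simp [ZMod.card]

lemma card_dirs_eq_one {p : ℕ} [Fact p.Prime] {u q : ZMod p × ZMod p} (h : u ≠ q) :
    (Finset.univ.filter fun m : Option (ZMod p) => icpt m u = icpt m q).card = 1 := by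
  by_cases h1 : u.1 = q.1
  · have h2 : u.2 ≠ q.2 := fun h2 => h (Prod.ext h1 h2)
    rw [show (Finset.univ.filter fun m : Option (ZMod p) => icpt m u = icpt m q) = {none} by
      ext m
      cases m with
      | none => simp [icpt, h1]
      | some a =>
        simp only [Finset.mem_filter, Finset.mem_univ, true_and, Finset.mem_singleton]
        simp only [icpt, h1]
        constructor
        · intro hh
          exact absurd (by linear_combination hh) h2
        · intro hh; exact absurd hh (by simp)]
    simp
  · have hd : u.1 - q.1 ≠ 0 := sub_ne_zero.mpr h1
    rw [show (Finset.univ.filter fun m : Option (ZMod p) => icpt m u = icpt m q)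
        = {some ((u.2 - q.2) / (u.1 - q.1))} by
      ext m
      cases m with
      | none =>
        simp only [Finset.mem_filter, Finset.mem_univ, true_and, Finset.mem_singleton]
        simp [icpt, h1]
      | some a =>
        simp only [Finset.mem_filter, Finset.mem_univ, true_and, Finset.mem_singleton,
          Option.some.injEq]
        simp only [icpt]
        rw [eq_div_iff hd]
        constructor
        · intro hh; linear_combination -hh
        · intro hh; linear_combination -hh]
    simp

section
variable {p : ℕ} [Fact p.Prime] (U : Finset (ZMod p × ZMod p))

lemma line_inter_eq (m : Option (ZMod p)) (c : ZMod p) :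
    lineWithSlope p m c ∩ U = U.filter fun q => icpt m q = c := by
  ext q; simp [mem_line_iff, and_comm]

/-- Weighted fiberwise summation along lines of a fixed slope. -/
lemma sum_icpt (m : Option (ZMod p)) (f : ZMod p → ℤ) :
    ∑ c : ZMod p, (lineCount p U m c : ℤ) * f c = ∑ q ∈ U, f (icpt m q) := by
  unfold lineCount
  simp only [line_inter_eq]
  rw [← Finset.sum_fiberwise_of_maps_to (g := icpt m) (fun q _ => Finset.mem_univ (icpt m q))
    (fun q => f (icpt m q))]
  refine Finset.sum_congr rfl fun c _ => ?_
  rw [Finset.sum_congr rfl (fun q hq => by rw [(Finset.mem_filter.mp hq).2]),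
    Finset.sum_const, nsmul_eq_mul]

lemma sum_lineCount (m : Option (ZMod p)) :
    ∑ c : ZMod p, (lineCount p U m c : ℤ) = (U.card : ℤ) := by
  have := sum_icpt U m (fun _ => 1)
  simpa using this

lemma sum_dirs {q : ZMod p × ZMod p} (hq : q ∈ U) :
    ∑ m : Option (ZMod p), lineCount p U m (icpt m q) = U.card + p := by
  unfold lineCount
  simp only [line_inter_eq, Finset.card_filter]
  rw [Finset.sum_comm]
  have : ∀ u ∈ U, (∑ m : Option (ZMod p), if icpt m u = icpt m q then 1 else 0)
      = if u = q then p + 1 else 1 := by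
    intro u _
    split_ifs with h
    · subst h; simp [Finset.card_univ, ZMod.card]
    · rw [← Finset.card_filter]
      exact card_dirs_eq_one h
  rw [Finset.sum_congr rfl this]
  have h2 : ∀ u ∈ U, (if u = q then p + 1 else 1) = (if u = q then p else 0) + 1 := by
    intro u _; split_ifs <;> omega
  rw [Finset.sum_congr rfl h2, Finset.sum_add_distrib, Finset.sum_ite_eq' U q (fun _ => p),
    if_pos hq, Finset.sum_const, smul_eq_mul, mul_one]
  omega

/-- A line with a non-special slope contains `n-1` or `n` points of `U`. -/
lemma nonspecial_line_card {n r : ℕ} {m : Option (ZMod p)}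
    (hm : ¬ IsSpecialDir p U m) (hn : 1 ≤ n) (hnp : n < p) (hr : r < p)
    (hcard : (U.card : ℤ) = n * p - r) (c : ZMod p) :
    (lineCount p U m c : ℤ) = n - 1 ∨ (lineCount p U m c : ℤ) = n := by
  rw [IsSpecialDir] at hm
  push_neg at hm
  obtain ⟨hrich, hpoor⟩ := hm c
  rw [IsRich] at hrich; rw [IsPoor] at hpoor
  push_neg at hrich hpoor
  have hp0 : 0 < p := (Fact.out : p.Prime).pos
  have hpq : (0:ℚ) < p := by exact_mod_cast hp0
  have hUq : (U.card : ℚ) = (n : ℚ) * p - r := by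
    have : ((U.card : ℤ) : ℚ) = (((n : ℤ) * p - r : ℤ) : ℚ) := by exact_mod_cast hcard
    push_cast at this; push_cast; linarith
  replace hrich : (lineCount p U m c : ℚ) < (U.card : ℚ) / p + 1 := hrich
  replace hpoor : (U.card : ℚ) / p - 1 < (lineCount p U m c : ℚ) := hpoor
  set T : ℕ := lineCount p U m c with hT
  have h1 : (T : ℚ) * p < (n : ℚ) * p - r + p := by
    have h3 := mul_lt_mul_of_pos_right hrich hpq
    rw [add_mul, one_mul, div_mul_cancel₀ _ (ne_of_gt hpq), hUq] at h3
    linarith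
  have h2 : (n : ℚ) * p - r - p < (T : ℚ) * p := by
    have h3 := mul_lt_mul_of_pos_right hpoor hpq
    rw [sub_mul, one_mul, div_mul_cancel₀ _ (ne_of_gt hpq), hUq] at h3
    linarith
  have h1' : (T : ℤ) * p < (n : ℤ) * p - r + p := by exact_mod_cast h1
  have h2' : (n : ℤ) * p - r - p < (T : ℤ) * p := by exact_mod_cast h2
  -- T ≤ n
  have hub : (T : ℤ) ≤ n := by
    by_contra hc
    push_neg at hc
    have : (n : ℤ) + 1 ≤ T := by omega
    nlinarith [this, hp0, hr]
  have hlb : (n : ℤ) - 1 ≤ T := by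
    by_contra hc
    push_neg at hc
    have : (T : ℤ) ≤ n - 2 := by omega
    nlinarith [this, hp0, hr]
  omega

lemma count_deficient {n r : ℕ} {m : Option (ZMod p)}
    (hm : ¬ IsSpecialDir p U m) (hn : 1 ≤ n) (hnp : n < p) (hr : r < p)
    (hcard : (U.card : ℤ) = n * p - r) :
    ((Finset.univ.filter fun c : ZMod p => (lineCount p U m c : ℤ) = n - 1).card : ℤ) = r := by
  have hbd := fun c => nonspecial_line_card U hm hn hnp hr hcard c
  have key : ∀ c : ZMod p, (n : ℤ) - lineCount p U m c
      = if (lineCount p U m c : ℤ) = n - 1 then 1 else 0 := by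
    intro c
    rcases hbd c with h | h <;> rw [h] <;> split_ifs <;> omega
  have hsum : ∑ c : ZMod p, ((n : ℤ) - lineCount p U m c) = r := by
    rw [Finset.sum_sub_distrib, Finset.sum_const, Finset.card_univ, ZMod.card,
      sum_lineCount U m, hcard]
    push_cast
    ring
  rw [Finset.sum_congr rfl (fun c _ => key c), Finset.sum_boole] at hsum
  exact hsum
end

theorem two_special_directions (p n r : ℕ) [Fact p.Prime]
    (U : Finset (ZMod p × ZMod p))
    (hn : 1 ≤ n) (hnp : n < p) (hr : r < p)
    (hpr : (p : ℤ) - r ≤ (n : ℤ))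
    (hcard : (U.card : ℤ) = n * p - r)
    (hlines : ¬ ∃ L : Fin n → Option (ZMod p) × ZMod p,
      ∀ u ∈ U, ∃ i : Fin n, u ∈ lineWithSlope p (L i).1 (L i).2) :
    ∃ m₁ m₂ : Option (ZMod p), m₁ ≠ m₂
      ∧ IsSpecialDir p U m₁ ∧ IsSpecialDir p U m₂ := by
  by_contra hcon
  push_neg at hcon
  obtain ⟨m₀, hm₀⟩ : ∃ m₀ : Option (ZMod p), ∀ m, m ≠ m₀ → ¬ IsSpecialDir p U m := by
    by_cases hex : ∃ m, IsSpecialDir p U m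
    · obtain ⟨m₀, hm₀s⟩ := hex
      exact ⟨m₀, fun m hm hs => (hcon m m₀ hm hs) hm₀s⟩
    · exact ⟨none, fun m _ hs => hex ⟨m, hs⟩⟩
  have hp0 : 0 < p := (Fact.out : p.Prime).pos
  -- number of deficient directions through a point
  set k : (ZMod p × ZMod p) → ℕ := fun q =>
    ((Finset.univ.erase m₀).filter fun m => (lineCount p U m (icpt m q) : ℤ) = n - 1).card
    with hk
  have hbd : ∀ m, m ≠ m₀ → ∀ c, (lineCount p U m c : ℤ) = n - 1 ∨ (lineCount p U m c : ℤ) = n :=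
    fun m hm c => nonspecial_line_card U (hm₀ m hm) hn hnp hr hcard c
  have hpoint : ∀ q ∈ U, (lineCount p U m₀ (icpt m₀ q) : ℤ) = p - r + k q := by
    intro q hq
    have hsd := sum_dirs U hq
    have hsd' : ∑ m : Option (ZMod p), (lineCount p U m (icpt m q) : ℤ)
        = (U.card : ℤ) + p := by exact_mod_cast congrArg (Nat.cast : ℕ → ℤ) hsd
    rw [← Finset.sum_erase_add _ _ (Finset.mem_univ m₀)] at hsd'
    have herase : ∑ m ∈ Finset.univ.erase m₀, (lineCount p U m (icpt m q) : ℤ)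
        = (p : ℤ) * n - k q := by
      have key : ∀ m ∈ Finset.univ.erase m₀, (lineCount p U m (icpt m q) : ℤ)
          = (n : ℤ) - (if (lineCount p U m (icpt m q) : ℤ) = n - 1 then 1 else 0) := by
        intro m hm
        rcases hbd m (Finset.ne_of_mem_erase hm) (icpt m q) with h | h <;> rw [h] <;>
          split_ifs <;> omega
      rw [Finset.sum_congr rfl key, Finset.sum_sub_distrib, Finset.sum_const,
        Finset.card_erase_of_mem (Finset.mem_univ m₀), Finset.sum_boole,
        Finset.card_univ, Fintype.card_option, ZMod.card]
      rw [hk]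
      push_cast
      ring
    rw [herase, hcard] at hsd'
    linarith
  have hksum : ∑ q ∈ U, (k q : ℤ) = p * r * ((n : ℤ) - 1) := by
    have hswap : ∑ q ∈ U, (k q : ℤ)
        = ∑ m ∈ Finset.univ.erase m₀, ∑ q ∈ U,
            (if (lineCount p U m (icpt m q) : ℤ) = n - 1 then 1 else 0) := by
      rw [Finset.sum_comm]
      refine Finset.sum_congr rfl fun q _ => ?_
      rw [Finset.sum_boole, hk]
    rw [hswap]
    have hinner : ∀ m ∈ Finset.univ.erase m₀, (∑ q ∈ U,
        (if (lineCount p U m (icpt m q) : ℤ) = n - 1 then 1 else 0))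
          = ((n : ℤ) - 1) * r := by
      intro m hm
      have hne := Finset.ne_of_mem_erase hm
      have := sum_icpt U m (fun c => if (lineCount p U m c : ℤ) = n - 1 then 1 else 0)
      rw [← this]
      have key : ∀ c : ZMod p, (lineCount p U m c : ℤ) *
          (if (lineCount p U m c : ℤ) = n - 1 then 1 else 0)
          = if (lineCount p U m c : ℤ) = n - 1 then (n : ℤ) - 1 else 0 := by
        intro c
        split_ifs with h
        · rw [h, mul_one]
        · rw [mul_zero]
      rw [Finset.sum_congr rfl (fun c _ => key c), ← Finset.sum_filter,
        Finset.sum_const, nsmul_eq_mul]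
      rw [count_deficient U (hm₀ m hne) hn hnp hr hcard]
      ring
    rw [Finset.sum_congr rfl hinner, Finset.sum_const,
      Finset.card_erase_of_mem (Finset.mem_univ m₀), nsmul_eq_mul,
      Finset.card_univ, Fintype.card_option, ZMod.card, Nat.add_sub_cancel]
    ring
  have hsq : ∑ c : ZMod p, (lineCount p U m₀ c : ℤ) * (lineCount p U m₀ c : ℤ)
      = ((n : ℤ) * p - r) * ((p : ℤ) - r) + p * r * ((n : ℤ) - 1) := by
    rw [sum_icpt U m₀ (fun c => (lineCount p U m₀ c : ℤ)),
      Finset.sum_congr rfl (fun q hq => hpoint q hq), Finset.sum_add_distrib,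
      Finset.sum_const, nsmul_eq_mul, hksum, hcard]
  set S : Finset (ZMod p) := Finset.univ.filter fun c => lineCount p U m₀ c ≠ 0 with hS
  have hmemS : ∀ u ∈ U, icpt m₀ u ∈ S := by
    intro u hu
    rw [hS, Finset.mem_filter]
    refine ⟨Finset.mem_univ _, ?_⟩
    have : 0 < lineCount p U m₀ (icpt m₀ u) := Finset.card_pos.mpr
      ⟨u, Finset.mem_inter.mpr ⟨(mem_line_iff _ _ _).mpr rfl, hu⟩⟩
    omega
  have hTlb : ∀ c ∈ S, (p : ℤ) - r ≤ lineCount p U m₀ c := by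
    intro c hc
    rw [hS, Finset.mem_filter] at hc
    obtain ⟨q, hq⟩ := Finset.card_pos.mp (Nat.pos_of_ne_zero hc.2)
    rw [Finset.mem_inter] at hq
    have hicpt : icpt m₀ q = c := (mem_line_iff _ _ _).mp hq.1
    have := hpoint q hq.2
    rw [hicpt] at this
    rw [this]
    have : (0 : ℤ) ≤ k q := Int.natCast_nonneg _
    linarith
  have hTub : ∀ c : ZMod p, (lineCount p U m₀ c : ℤ) ≤ p := by
    intro c
    have h1 : lineCount p U m₀ c ≤ (lineWithSlope p m₀ c).card :=
      Finset.card_le_card Finset.inter_subset_left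
    rw [line_card] at h1
    exact_mod_cast h1
  have hsumS : ∑ c ∈ S, (lineCount p U m₀ c : ℤ) = (n : ℤ) * p - r := by
    rw [← hcard, ← sum_lineCount U m₀]
    rw [Finset.sum_filter_of_ne]
    intro c _ hc
    simp only [ne_eq]
    intro h0
    rw [h0] at hc
    simp at hc
  have hsqS : ∑ c ∈ S, (lineCount p U m₀ c : ℤ) * (lineCount p U m₀ c : ℤ)
      = ((n : ℤ) * p - r) * ((p : ℤ) - r) + p * r * ((n : ℤ) - 1) := by
    rw [← hsq, Finset.sum_filter_of_ne]
    intro c _ hc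
    simp only [ne_eq]
    intro h0
    rw [h0] at hc
    simp at hc
  have hnonneg : (0 : ℤ) ≤ ∑ c ∈ S,
      ((lineCount p U m₀ c : ℤ) - ((p : ℤ) - r)) * ((p : ℤ) - lineCount p U m₀ c) := by
    refine Finset.sum_nonneg fun c hc => mul_nonneg ?_ ?_
    · linarith [hTlb c hc]
    · linarith [hTub c]
  have hexpand : ∑ c ∈ S,
      ((lineCount p U m₀ c : ℤ) - ((p : ℤ) - r)) * ((p : ℤ) - lineCount p U m₀ c)
      = (2 * (p : ℤ) - r) * ∑ c ∈ S, (lineCount p U m₀ c : ℤ)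
        - ∑ c ∈ S, (lineCount p U m₀ c : ℤ) * (lineCount p U m₀ c : ℤ)
        - S.card * ((p : ℤ) * ((p : ℤ) - r)) := by
    have hterm : ∀ c ∈ S, ((lineCount p U m₀ c : ℤ) - ((p : ℤ) - r)) *
        ((p : ℤ) - lineCount p U m₀ c)
        = (2 * (p : ℤ) - r) * (lineCount p U m₀ c : ℤ)
          - (lineCount p U m₀ c : ℤ) * (lineCount p U m₀ c : ℤ)
          - ((p : ℤ) * ((p : ℤ) - r)) := fun c _ => by ring
    rw [Finset.sum_congr rfl hterm, Finset.sum_sub_distrib, Finset.sum_sub_distrib,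
      ← Finset.mul_sum, Finset.sum_const, nsmul_eq_mul]
  rw [hexpand, hsumS, hsqS] at hnonneg
  have hppos : (0 : ℤ) < p := by exact_mod_cast hp0
  have hprpos : (0 : ℤ) < (p : ℤ) - r := by omega
  have hid : (2 * (p : ℤ) - r) * ((n : ℤ) * p - r)
      - (((n : ℤ) * p - r) * ((p : ℤ) - r) + p * r * ((n : ℤ) - 1))
      - (S.card : ℤ) * ((p : ℤ) * ((p : ℤ) - r))
      = (p : ℤ) * ((p : ℤ) - r) * ((n : ℤ) - S.card) := by ring
  rw [hid] at hnonneg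
  have hsn : S.card ≤ n := by
    by_contra hgt
    push_neg at hgt
    have hgt' : (n : ℤ) + 1 ≤ S.card := by exact_mod_cast hgt
    nlinarith [mul_pos hppos hprpos]
  -- U is covered by the ≤ n lines of slope m₀ with intercepts in S : contradiction
  refine hlines ⟨fun i => (m₀, S.toList.getD i 0), ?_⟩
  intro u hu
  have hcS : icpt m₀ u ∈ S.toList := Finset.mem_toList.mpr (hmemS u hu)
  obtain ⟨j, hj, hget⟩ := List.mem_iff_getElem.mp hcS
  have hjn : j < n := lt_of_lt_of_le (by simpa [Finset.length_toList] using hj) hsn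
  refine ⟨⟨j, hjn⟩, ?_⟩
  have : S.toList.getD j 0 = icpt m₀ u := by
    rw [List.getD_eq_getElem S.toList 0 hj, hget]
  simp only []
  rw [this, mem_line_iff]
end
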